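/- arXiv:2212.03665 — 5 statements merged into one kernel-verified Lean document; each statement's English description precedes it below -/
import Mathlib

section
/- Identifiability of the mixture Poisson log-normal model: suppose two mixture Poisson log-normal densities agree, i.e. Σ_{g=1}^{G} π_g p(y;Θ_g,μ_g) = Σ_{g=1}^{G'} π'_g p(y;Θ'_g,μ'_g) for every y ∈ ℕᵖ, where both sets of component parameters satisfy Conditions (C1) and (C3) and all mixing proportions are strictly positive. Then G = G' and there is a permutation σ of {1,…,G} with π'_g = π_{σ(g)}, μ'_g = μ_{σ(g)} and Θ'_g = Θ_{σ(g)} for every g. -/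
open MeasureTheory Filter

noncomputable section

/-- falling factorial `φ(y,n) = y(y-1)⋯(y-n+1)` as a real number. -/
def fallFact (y n : ℕ) : ℝ := ∏ i ∈ Finset.range n, ((y : ℝ) - (i : ℝ))

/-- density of the Gaussian distribution `N(μ, Θ⁻¹)`. -/
def gaussDensity {p : ℕ} (Θ : Matrix (Fin p) (Fin p) ℝ) (μ : Fin p → ℝ) (x : Fin p → ℝ) : ℝ :=
  (2 * Real.pi) ^ (-(p : ℝ) / 2) * Real.sqrt Θ.det *
    Real.exp (-(dotProduct (x - μ) (Θ.mulVec (x - μ))) / 2)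

/-- Poisson log-normal density on `ℕᵖ`. -/
def plnDensity {p : ℕ} (Θ : Matrix (Fin p) (Fin p) ℝ) (μ : Fin p → ℝ) (y : Fin p → ℕ) : ℝ :=
  ∫ x : Fin p → ℝ, gaussDensity Θ μ x *
    ∏ j, Real.exp (x j * (y j : ℝ) - Real.exp (x j)) / (Nat.factorial (y j) : ℝ)

/-- `Θ` is symmetric with all eigenvalues in `[m, M]`. -/
def eigBounds {p : ℕ} (m M : ℝ) (Θ : Matrix (Fin p) (Fin p) ℝ) : Prop :=
  Θ.IsSymm ∧ ∀ v : Fin p → ℝ,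
    m * (∑ i, v i ^ 2) ≤ dotProduct v (Θ.mulVec v) ∧
      dotProduct v (Θ.mulVec v) ≤ M * (∑ i, v i ^ 2)

/-- Index set of the half-vectorization `vech` of a symmetric `p × p` matrix. -/
abbrev VechIdx (p : ℕ) := {ij : Fin p × Fin p // ij.1 ≤ ij.2}

/-- symmetric matrix built from a half-vectorization. -/
def toMat {p : ℕ} (v : VechIdx p → ℝ) : Matrix (Fin p) (Fin p) ℝ :=
  fun i j => if h : i ≤ j then v ⟨(i, j), h⟩ else v ⟨(j, i), le_of_not_ge h⟩

/-- mixture Poisson log-normal density with proportions `pw`, means `μs` and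
precision matrices encoded by `ν`. -/
def mixDensity {p G : ℕ} (pw : Fin G → ℝ) (μs : Fin G → Fin p → ℝ)
    (ν : Fin G × VechIdx p → ℝ) (y : Fin p → ℕ) : ℝ :=
  ∑ g, pw g * plnDensity (toMat fun ij => ν (g, ij)) (μs g) y

/-- the parameter space `D`. -/
def paramSet (p G : ℕ) (m M : ℝ) : Set (Fin G × VechIdx p → ℝ) :=
  {ν | ∀ g, eigBounds m M (toMat fun ij => ν (g, ij))}

/-- Condition (C3): bounded and pairwise distinct mean vectors. -/
def condC3 {p G : ℕ} (M : ℝ) (μs : Fin G → Fin p → ℝ) : Prop :=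
  (∀ g, ‖μs g‖ ≤ M) ∧ Function.Injective μs

/-- the mixture Poisson log-normal distribution, as a measure on `ℕᵖ`. -/
def mixMeasure {p G : ℕ} (pw : Fin G → ℝ) (μs : Fin G → Fin p → ℝ)
    (ν : Fin G × VechIdx p → ℝ) : Measure (Fin p → ℕ) :=
  Measure.sum fun y => (ENNReal.ofReal (mixDensity pw μs ν y)) • Measure.dirac y

/-- euclidean (`ℓ₂`) norm of a vector. -/
def l2norm {ι : Type*} [Fintype ι] (v : ι → ℝ) : ℝ := Real.sqrt (∑ i, v i ^ 2)

/-- gradient (vector of partial derivatives) of `f` at `x`. -/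
def gradAt {ι : Type*} [Fintype ι] [DecidableEq ι] (f : (ι → ℝ) → ℝ) (x : ι → ℝ) : ι → ℝ :=
  fun a => fderiv ℝ f x (Pi.single a 1)

/-- `(a,b)` entry of the Hessian matrix of `f` at `x`. -/
def hessAt {ι : Type*} [Fintype ι] [DecidableEq ι] (f : (ι → ℝ) → ℝ) (x : ι → ℝ)
    (a b : ι) : ℝ :=
  fderiv ℝ (fun z => fderiv ℝ f z (Pi.single b 1)) x (Pi.single a 1)

/-- Fisher information matrix of the mixture Poisson log-normal model at `ν`. -/
def fisherInfo {p G : ℕ} (pw : Fin G → ℝ) (μs : Fin G → Fin p → ℝ)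
    (ν : Fin G × VechIdx p → ℝ) :
    Matrix (Fin G × VechIdx p) (Fin G × VechIdx p) ℝ :=
  fun a b => ∑' y : Fin p → ℕ, mixDensity pw μs ν y *
    (gradAt (fun ν' => Real.log (mixDensity pw μs ν' y)) ν a *
      gradAt (fun ν' => Real.log (mixDensity pw μs ν' y)) ν b)

/-- the lasso penalty `R(ν) = Σ_g Σ_{l≠m} |Θ_{g,lm}|`. -/
def penR {p G : ℕ} (ν : Fin G × VechIdx p → ℝ) : ℝ :=
  ∑ g : Fin G, ∑ l : Fin p, ∑ m' : Fin p,
    if l ≠ m' then |toMat (fun ij => ν (g, ij)) l m'| else 0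

/-- the penalized negative log-likelihood objective `−n⁻¹ℓₙ(ν) + λ R(ν)`. -/
def objective {p G : ℕ} (pw : Fin G → ℝ) (μs : Fin G → Fin p → ℝ) (lam : ℝ) (n : ℕ)
    (ys : ℕ → Fin p → ℕ) (ν : Fin G × VechIdx p → ℝ) : ℝ :=
  -(1 / n : ℝ) * ∑ i ∈ Finset.range n, Real.log (mixDensity pw μs ν (ys i)) + lam * penR ν

/-- maximum absolute row sum norm `‖A‖_{1,∞}`. -/
def maxRowSum {a b : Type*} [Fintype b] (A : Matrix a b ℝ) : ℝ := ⨆ i, ∑ j, |A i j|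

/-- spectral norm of a real matrix. -/
def specNorm {ι : Type*} [Fintype ι] (A : Matrix ι ι ℝ) : ℝ :=
  ⨆ v : ι → ℝ, l2norm (A.mulVec v) / l2norm v

/-- Poisson probability mass function with rate `r`. -/
def poissonPMF (r : ℝ) (k : ℕ) : ℝ := Real.exp (-r) * r ^ k / (Nat.factorial k : ℝ)

end

open MeasureTheory Filter



section PLNAux

open Matrix

noncomputable section


lemma fallFact_nonneg (y n : ℕ) : 0 ≤ fallFact y n := by
  rcases lt_or_ge y n with h | h
  · exact le_of_eq (Finset.prod_eq_zero (Finset.mem_range.mpr h) (by simp)).symm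
  · exact Finset.prod_nonneg fun i hi => by
      have : (i : ℝ) ≤ y := by
        exact_mod_cast le_of_lt (lt_of_lt_of_le (Finset.mem_range.mp hi) h)
      linarith

lemma fallFact_eq_zero {y n : ℕ} (h : y < n) : fallFact y n = 0 :=
  Finset.prod_eq_zero (Finset.mem_range.mpr h) (by simp)

lemma fallFact_mul_factorial (n : ℕ) : ∀ j : ℕ,
    fallFact (j + n) n * (Nat.factorial j : ℝ) = (Nat.factorial (j + n) : ℝ) := by
  induction n with
  | zero => intro j; simp [fallFact]
  | succ n ih =>
    intro j
    have h1 : fallFact (j + (n+1)) (n+1) = fallFact ((j+1) + n) n * ((j+1 : ℕ) : ℝ) := by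
      rw [fallFact, Finset.prod_range_succ]
      have h2 : j + (n + 1) = (j + 1) + n := by ring
      rw [h2, fallFact]
      push_cast
      ring
    have h3 := ih (j + 1)
    have hfac : (Nat.factorial (j+1) : ℝ) = ((j+1 : ℕ) : ℝ) * (Nat.factorial j : ℝ) := by
      rw [Nat.factorial_succ]; push_cast; ring
    calc fallFact (j + (n+1)) (n+1) * (Nat.factorial j : ℝ)
        = fallFact ((j+1) + n) n * (((j+1 : ℕ) : ℝ) * (Nat.factorial j : ℝ)) := by
          rw [h1]; ring
      _ = fallFact ((j+1) + n) n * (Nat.factorial (j+1) : ℝ) := by rw [hfac]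
      _ = (Nat.factorial ((j+1) + n) : ℝ) := h3
      _ = (Nat.factorial (j + (n+1)) : ℝ) := by norm_num; ring_nf

/-- key 1-d series identity: `∑ₖ φ(k,n) e^{xk-eˣ}/k! = e^{nx}`. -/
lemma hasSum_fallFact (x : ℝ) (n : ℕ) :
    HasSum (fun k : ℕ => fallFact k n * Real.exp (x * k - Real.exp x) / (Nat.factorial k : ℝ))
      (Real.exp (n * x)) := by
  set lam := Real.exp x with hlam
  have hlampos : 0 < lam := Real.exp_pos x
  have hexp : HasSum (fun j : ℕ => lam ^ j / (Nat.factorial j : ℝ)) (Real.exp lam) := by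
    have := NormedSpace.expSeries_div_hasSum_exp (𝔸 := ℝ) lam
    rwa [← Real.exp_eq_exp_ℝ] at this
  have hmul : HasSum (fun j : ℕ => lam ^ n * Real.exp (-lam) * (lam ^ j / (Nat.factorial j : ℝ)))
      (lam ^ n * Real.exp (-lam) * Real.exp lam) := hexp.mul_left _
  have hval : lam ^ n * Real.exp (-lam) * Real.exp lam = Real.exp (n * x) := by
    rw [mul_assoc, ← Real.exp_add, neg_add_cancel, Real.exp_zero, mul_one, hlam,
      ← Real.exp_nat_mul]
  rw [hval] at hmul
  have hinj : Function.Injective (fun j : ℕ => j + n) := fun a b h => by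
    simpa using h
  have h0 : ∀ k ∉ Set.range (fun j : ℕ => j + n),
      fallFact k n * Real.exp (x * k - Real.exp x) / (Nat.factorial k : ℝ) = 0 := by
    intro k hk
    have hkn : k < n := by
      by_contra h
      exact hk ⟨k - n, by simp; omega⟩
    rw [fallFact_eq_zero hkn]; simp
  rw [← Function.Injective.hasSum_iff hinj h0]
  convert hmul using 1
  funext j
  simp only [Function.comp_apply]
  have hff : fallFact (j + n) n = (Nat.factorial (j+n) : ℝ) / (Nat.factorial j : ℝ) := by
    rw [eq_div_iff (by positivity)]
    exact fallFact_mul_factorial n j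
  have hterm : Real.exp (x * ((j + n : ℕ) : ℝ) - lam) = lam ^ (j + n) * Real.exp (-lam) := by
    rw [sub_eq_add_neg, Real.exp_add, mul_comm x ((j+n : ℕ):ℝ), Real.exp_nat_mul, ← hlam]
  show fallFact (j + n) n * Real.exp (x * ((j + n : ℕ) : ℝ) - lam) / (Nat.factorial (j+n) : ℝ)
      = lam ^ n * Real.exp (-lam) * (lam ^ j / (Nat.factorial j : ℝ))
  rw [hff, hterm, pow_add]
  have h1 : (0:ℝ) < (Nat.factorial (j+n) : ℝ) := by positivity
  have h2 : (0:ℝ) < (Nat.factorial j : ℝ) := by positivity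
  field_simp


/-- tsum over a pi type of a product factorizes. -/
lemma tsum_pi_prod : ∀ {q : ℕ} (f : Fin q → ℕ → ENNReal),
    ∑' y : Fin q → ℕ, ∏ j, f j (y j) = ∏ j, ∑' k, f j k := by
  intro q
  induction q with
  | zero =>
    intro f
    rw [tsum_eq_single (fun i => i.elim0) (fun b hb => absurd (funext fun i => i.elim0) hb)]
    simp
  | succ q ih =>
    intro f
    rw [← Equiv.tsum_eq (Fin.consEquiv (fun _ => ℕ))]
    have : ∀ kz : ℕ × (Fin q → ℕ),
        (∏ j, f j (((Fin.consEquiv (fun _ => ℕ)) kz) j))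
          = f 0 kz.1 * ∏ j : Fin q, f j.succ (kz.2 j) := by
      intro kz
      rw [Fin.prod_univ_succ]
      simp [Fin.consEquiv]
    simp_rw [this]
    rw [ENNReal.tsum_prod']
    simp_rw [ENNReal.tsum_mul_left, ENNReal.tsum_mul_right]
    rw [ih (fun j => f j.succ), Fin.prod_univ_succ]

variable {p : ℕ} {m M : ℝ}


lemma eigBounds.posDef {Θ : Matrix (Fin p) (Fin p) ℝ} (h : eigBounds m M Θ) (hm : 0 < m) :
    Θ.PosDef := by
  refine Matrix.PosDef.of_dotProduct_mulVec_pos ?_ ?_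
  · ext i j
    simpa [Matrix.conjTranspose_apply] using congrFun (congrFun h.1 i) j
  · intro x hx
    simp only [star_trivial]
    obtain ⟨i, hi⟩ : ∃ i, x i ≠ 0 := Function.ne_iff.mp hx
    have hsum : 0 < ∑ i, x i ^ 2 :=
      Finset.sum_pos' (fun i _ => sq_nonneg _) ⟨i, Finset.mem_univ i, by positivity⟩
    have := (h.2 x).1
    calc (0:ℝ) < m * ∑ i, x i ^ 2 := by positivity
      _ ≤ _ := this

lemma eigBounds.isUnitDet {Θ : Matrix (Fin p) (Fin p) ℝ} (h : eigBounds m M Θ) (hm : 0 < m) :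
    IsUnit Θ.det := (h.posDef hm).det_pos.ne'.isUnit

lemma symm_dot {Θ : Matrix (Fin p) (Fin p) ℝ} (hs : Θ.IsSymm) (u w : Fin p → ℝ) :
    u ⬝ᵥ Θ *ᵥ w = w ⬝ᵥ Θ *ᵥ u := by
  rw [Matrix.dotProduct_mulVec u Θ w]
  rw [← Matrix.mulVec_transpose, hs.eq, dotProduct_comm]

/-- completing the square. -/
lemma complete_square {Θ : Matrix (Fin p) (Fin p) ℝ} (hs : Θ.IsSymm) (hd : IsUnit Θ.det)
    (μ n z : Fin p → ℝ) :
    -(((z + (μ + Θ⁻¹ *ᵥ n)) - μ) ⬝ᵥ Θ *ᵥ ((z + (μ + Θ⁻¹ *ᵥ n)) - μ)) / 2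
        + n ⬝ᵥ (z + (μ + Θ⁻¹ *ᵥ n))
      = -(z ⬝ᵥ Θ *ᵥ z) / 2 + (n ⬝ᵥ μ + n ⬝ᵥ (Θ⁻¹ *ᵥ n) / 2) := by
  set s := Θ⁻¹ *ᵥ n with hsdef
  have hz : (z + (μ + s)) - μ = z + s := by ring
  have hTs : Θ *ᵥ s = n := by
    rw [hsdef, Matrix.mulVec_mulVec, Matrix.mul_nonsing_inv Θ hd, Matrix.one_mulVec]
  have hcross : s ⬝ᵥ Θ *ᵥ z = z ⬝ᵥ n := by
    rw [symm_dot hs s z, hTs]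
  rw [hz, Matrix.mulVec_add, hTs]
  have h1 : n ⬝ᵥ z = z ⬝ᵥ n := dotProduct_comm n z
  have h2 : n ⬝ᵥ s = s ⬝ᵥ n := dotProduct_comm n s
  simp only [dotProduct_add, add_dotProduct]
  rw [hcross, h1, h2]
  ring

lemma integrable_exp_quad {b : ℝ} (hb : 0 < b) (c : ℝ) :
    Integrable fun t : ℝ => Real.exp (-b * t ^ 2 + c * t) := by
  have heq : (fun t : ℝ => Real.exp (-b * t ^ 2 + c * t))
      = fun t => Real.exp (c^2/(4*b)) * Real.exp (-b * (t - c/(2*b))^2) := by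
    funext t
    rw [← Real.exp_add]
    congr 1
    field_simp
    ring
  rw [heq]
  exact ((integrable_exp_neg_mul_sq hb).comp_sub_right (c/(2*b))).const_mul _

lemma integrable_exp_quad' {b : ℝ} (hb : 0 < b) (c a : ℝ) :
    Integrable fun t : ℝ => Real.exp (-b * (t - a) ^ 2 + c * t) := by
  have heq : (fun t : ℝ => Real.exp (-b * (t - a) ^ 2 + c * t))
      = fun t => Real.exp (c * a) * Real.exp (-b * (t-a) ^ 2 + c * (t-a)) := by
    funext t
    rw [← Real.exp_add]
    congr 1
    ring
  rw [heq]
  exact (((integrable_exp_quad hb c).comp_sub_right a).const_mul _)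

lemma cont_quad (Θ : Matrix (Fin p) (Fin p) ℝ) (μ : Fin p → ℝ) :
    Continuous fun x : Fin p → ℝ => (x - μ) ⬝ᵥ Θ *ᵥ (x - μ) := by
  simp only [dotProduct, Matrix.mulVec]
  fun_prop

lemma cont_dot (c : Fin p → ℝ) : Continuous fun x : Fin p → ℝ => c ⬝ᵥ x := by
  unfold dotProduct
  fun_prop

lemma integrable_exp_gauss {Θ : Matrix (Fin p) (Fin p) ℝ} (h : eigBounds m M Θ) (hm : 0 < m)
    (μ c : Fin p → ℝ) :
    Integrable fun x : Fin p → ℝ => Real.exp (-((x - μ) ⬝ᵥ Θ *ᵥ (x - μ)) / 2 + c ⬝ᵥ x) := by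
  have hint : Integrable fun x : Fin p → ℝ =>
      ∏ j, Real.exp (-(m/2) * (x j - μ j) ^ 2 + c j * x j) :=
    Integrable.fintype_prod (𝕜 := ℝ) fun j => integrable_exp_quad' (by linarith) _ _
  refine hint.mono' ?_ ?_
  · apply Continuous.aestronglyMeasurable
    exact Real.continuous_exp.comp (((cont_quad Θ μ).neg.div_const 2).add (cont_dot c))
  · refine ae_of_all _ fun x => ?_
    rw [Real.norm_eq_abs, abs_of_nonneg (Real.exp_pos _).le, ← Real.exp_sum]
    apply Real.exp_le_exp.mpr
    have hb := (h.2 (x - μ)).1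
    have hb' : m * ∑ j, (x j - μ j)^2 ≤ (x - μ) ⬝ᵥ Θ *ᵥ (x - μ) := by
      simpa [Pi.sub_apply] using hb
    have heq : ∑ j, (-(m/2) * (x j - μ j) ^ 2 + c j * x j)
        = -(m * ∑ j, (x j - μ j)^2)/2 + c ⬝ᵥ x := by
      rw [Finset.sum_add_distrib, dotProduct]
      congr 1
      calc ∑ j, -(m/2) * (x j - μ j) ^ 2
          = ∑ j, -(m * (x j - μ j) ^ 2 / 2) := Finset.sum_congr rfl fun j _ => by ring
        _ = -∑ j, m * (x j - μ j) ^ 2 / 2 := Finset.sum_neg_distrib _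
        _ = -(m * ∑ j, (x j - μ j)^2)/2 := by rw [← Finset.sum_div, ← Finset.mul_sum, neg_div]
    rw [heq]
    linarith
variable {p : ℕ} {m M : ℝ} {Θ : Matrix (Fin p) (Fin p) ℝ}


lemma gaussDensity_nonneg (μ x : Fin p → ℝ) : 0 ≤ gaussDensity Θ μ x := by
  unfold gaussDensity
  have : (0:ℝ) < (2 * Real.pi) ^ (-(p : ℝ) / 2) :=
    Real.rpow_pos_of_pos (by positivity) _
  positivity

lemma gaussDensity_continuous (μ : Fin p → ℝ) : Continuous (gaussDensity Θ μ) := by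
  unfold gaussDensity
  exact continuous_const.mul (Real.continuous_exp.comp (((cont_quad Θ μ).neg).div_const 2))

lemma prodTerm_continuous (y : Fin p → ℕ) :
    Continuous fun x : Fin p → ℝ =>
      ∏ j, Real.exp (x j * (y j : ℝ) - Real.exp (x j)) / (Nat.factorial (y j) : ℝ) := by
  apply continuous_finset_prod
  intro j _
  exact (Real.continuous_exp.comp (((continuous_apply j).mul continuous_const).sub
    (Real.continuous_exp.comp (continuous_apply j)))).div_const _

lemma prodTerm_nonneg (y : Fin p → ℕ) (x : Fin p → ℝ) :
    0 ≤ ∏ j, Real.exp (x j * (y j : ℝ) - Real.exp (x j)) / (Nat.factorial (y j) : ℝ) :=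
  Finset.prod_nonneg fun j _ => div_nonneg (Real.exp_pos _).le (by positivity)

lemma plnDensity_nonneg (μ : Fin p → ℝ) (y : Fin p → ℕ) : 0 ≤ plnDensity Θ μ y :=
  integral_nonneg fun x => mul_nonneg (gaussDensity_nonneg μ x) (prodTerm_nonneg y x)

/-- the main transform lemma. -/
lemma transform_hasSum (hΘ : eigBounds m M Θ) (hm : 0 < m) (μ : Fin p → ℝ) (n : Fin p → ℕ) :
    HasSum (fun y : Fin p → ℕ => (∏ j, fallFact (y j) (n j)) * plnDensity Θ μ y)
      (((2 * Real.pi) ^ (-(p : ℝ) / 2) * Real.sqrt Θ.det *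
          ∫ z : Fin p → ℝ, Real.exp (-(z ⬝ᵥ Θ *ᵥ z) / 2)) *
        Real.exp ((fun j => (n j : ℝ)) ⬝ᵥ μ
          + (fun j => (n j : ℝ)) ⬝ᵥ (Θ⁻¹ *ᵥ fun j => (n j : ℝ)) / 2)) := by
  classical
  set nR : Fin p → ℝ := fun j => (n j : ℝ) with hnR
  set cst : ℝ := (2 * Real.pi) ^ (-(p : ℝ) / 2) * Real.sqrt Θ.det with hcst
  set F : (Fin p → ℕ) → (Fin p → ℝ) → ℝ := fun y x => gaussDensity Θ μ x *
    ∏ j, Real.exp (x j * (y j : ℝ) - Real.exp (x j)) / (Nat.factorial (y j) : ℝ) with hF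
  set f : (Fin p → ℕ) → (Fin p → ℝ) → ℝ :=
    fun y x => (∏ j, fallFact (y j) (n j)) * F y x with hf
  have hW : ∀ y : Fin p → ℕ, 0 ≤ ∏ j, fallFact (y j) (n j) :=
    fun y => Finset.prod_nonneg fun j _ => fallFact_nonneg _ _
  have hfnonneg : ∀ y x, 0 ≤ f y x := fun y x =>
    mul_nonneg (hW y) (mul_nonneg (gaussDensity_nonneg μ x) (prodTerm_nonneg y x))
  have hfcont : ∀ y, Continuous (f y) := fun y =>
    continuous_const.mul ((gaussDensity_continuous μ).mul (prodTerm_continuous y))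
  set G : (Fin p → ℝ) → ℝ := fun x => gaussDensity Θ μ x * Real.exp (nR ⬝ᵥ x) with hG
  have hGnonneg : ∀ x, 0 ≤ G x := fun x =>
    mul_nonneg (gaussDensity_nonneg μ x) (Real.exp_pos _).le
  have hGcont : Continuous G :=
    (gaussDensity_continuous μ).mul (Real.continuous_exp.comp (cont_dot nR))
  have hGeq : ∀ x, G x = cst * Real.exp (-((x - μ) ⬝ᵥ Θ *ᵥ (x - μ)) / 2 + nR ⬝ᵥ x) := by
    intro x
    rw [hG]
    show gaussDensity Θ μ x * Real.exp (nR ⬝ᵥ x) = _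
    unfold gaussDensity
    rw [Real.exp_add, ← hcst]
    ring
  have hGint : Integrable G := by
    refine (((integrable_exp_gauss hΘ hm μ nR).const_mul cst)).congr ?_
    exact ae_of_all _ fun x => (hGeq x).symm
  -- pointwise tsum identity
  have hpt : ∀ x, ∑' y : Fin p → ℕ, ENNReal.ofReal (f y x) = ENNReal.ofReal (G x) := by
    intro x
    have h1d : ∀ j : Fin p, ∑' k : ℕ, ENNReal.ofReal
        (fallFact k (n j) * (Real.exp (x j * k - Real.exp (x j)) / (Nat.factorial k : ℝ)))
        = ENNReal.ofReal (Real.exp ((n j) * x j)) := by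
      intro j
      have hs := hasSum_fallFact (x j) (n j)
      simp_rw [mul_div_assoc] at hs
      have hnn : ∀ k : ℕ, 0 ≤ fallFact k (n j) *
          (Real.exp (x j * k - Real.exp (x j)) / (Nat.factorial k : ℝ)) := fun k =>
        mul_nonneg (fallFact_nonneg _ _) (div_nonneg (Real.exp_pos _).le (by positivity))
      rw [← hs.tsum_eq, ENNReal.ofReal_tsum_of_nonneg hnn hs.summable]
    have hsplit : ∀ y : Fin p → ℕ, f y x = gaussDensity Θ μ x *
        ∏ j, (fallFact (y j) (n j) *
          (Real.exp (x j * (y j : ℝ) - Real.exp (x j)) / (Nat.factorial (y j) : ℝ))) := by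
      intro y
      rw [hf, hF]
      simp only
      rw [Finset.prod_mul_distrib]
      ring
    calc ∑' y : Fin p → ℕ, ENNReal.ofReal (f y x)
        = ∑' y : Fin p → ℕ, ENNReal.ofReal (gaussDensity Θ μ x) *
            ∏ j, ENNReal.ofReal (fallFact (y j) (n j) *
              (Real.exp (x j * (y j : ℝ) - Real.exp (x j)) / (Nat.factorial (y j) : ℝ))) := by
          congr 1
          funext y
          rw [hsplit y, ENNReal.ofReal_mul (gaussDensity_nonneg μ x),
            ENNReal.ofReal_prod_of_nonneg fun j _ => mul_nonneg (fallFact_nonneg _ _)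
              (div_nonneg (Real.exp_pos _).le (by positivity))]
      _ = ENNReal.ofReal (gaussDensity Θ μ x) * ∑' y : Fin p → ℕ,
            ∏ j, ENNReal.ofReal (fallFact (y j) (n j) *
              (Real.exp (x j * (y j : ℝ) - Real.exp (x j)) / (Nat.factorial (y j) : ℝ))) :=
          ENNReal.tsum_mul_left
      _ = ENNReal.ofReal (gaussDensity Θ μ x) * ∏ j, ∑' k : ℕ,
            ENNReal.ofReal (fallFact k (n j) *
              (Real.exp (x j * k - Real.exp (x j)) / (Nat.factorial k : ℝ))) := by
          rw [tsum_pi_prod (fun j k => ENNReal.ofReal (fallFact k (n j) *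
            (Real.exp (x j * k - Real.exp (x j)) / (Nat.factorial k : ℝ))))]
      _ = ENNReal.ofReal (gaussDensity Θ μ x) * ∏ j, ENNReal.ofReal (Real.exp ((n j) * x j)) := by
          simp_rw [h1d]
      _ = ENNReal.ofReal (G x) := by
          rw [← ENNReal.ofReal_prod_of_nonneg fun j _ => (Real.exp_pos _).le,
            ← Real.exp_sum, ← ENNReal.ofReal_mul (gaussDensity_nonneg μ x), hG]
          try congr 2
          try simp [dotProduct, hnR]
  set L : (Fin p → ℕ) → ENNReal := fun y => ∫⁻ x, ENNReal.ofReal (f y x) with hL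
  have hmeas : ∀ y : Fin p → ℕ, AEMeasurable (fun x => ENNReal.ofReal (f y x)) volume :=
    fun y => (ENNReal.measurable_ofReal.comp (hfcont y).measurable).aemeasurable
  have hLsum : ∑' y, L y = ∫⁻ x, ENNReal.ofReal (G x) := by
    rw [hL, ← lintegral_tsum hmeas]
    exact lintegral_congr hpt
  have hGfin : ∫⁻ x, ENNReal.ofReal (G x) ≠ ⊤ := by
    have h2 := hGint.2
    rw [hasFiniteIntegral_iff_ofReal (ae_of_all _ hGnonneg)] at h2
    exact h2.ne
  have hLfin : ∀ y, L y ≠ ⊤ := fun y =>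
    ne_top_of_le_ne_top (hLsum ▸ hGfin) (ENNReal.le_tsum y)
  have hint_eq : (fun y : Fin p → ℕ => (∏ j, fallFact (y j) (n j)) * plnDensity Θ μ y)
      = fun y => (L y).toReal := by
    funext y
    have h1 : ∫ x, f y x = (L y).toReal :=
      integral_eq_lintegral_of_nonneg_ae (ae_of_all _ (hfnonneg y))
        (hfcont y).aestronglyMeasurable
    rw [← h1, hf]
    simp only
    rw [integral_const_mul]
    rfl
  rw [hint_eq]
  refine (Summable.hasSum_iff (ENNReal.summable_toReal (hLsum ▸ hGfin))).mpr ?_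
  rw [← ENNReal.tsum_toReal_eq hLfin, hLsum]
  have hIG : (∫⁻ x, ENNReal.ofReal (G x)).toReal = ∫ x, G x :=
    (integral_eq_lintegral_of_nonneg_ae (ae_of_all _ hGnonneg)
      hGcont.aestronglyMeasurable).symm
  rw [hIG]
  -- compute the gaussian integral
  have step1 : ∫ x, G x = cst * ∫ x : Fin p → ℝ,
      Real.exp (-((x - μ) ⬝ᵥ Θ *ᵥ (x - μ)) / 2 + nR ⬝ᵥ x) := by
    simp_rw [hGeq]
    rw [integral_const_mul]
  have step2 : (∫ x : Fin p → ℝ, Real.exp (-((x - μ) ⬝ᵥ Θ *ᵥ (x - μ)) / 2 + nR ⬝ᵥ x))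
      = (∫ z : Fin p → ℝ, Real.exp (-(z ⬝ᵥ Θ *ᵥ z) / 2)) *
        Real.exp (nR ⬝ᵥ μ + nR ⬝ᵥ (Θ⁻¹ *ᵥ nR) / 2) := by
    rw [← integral_add_right_eq_self
      (fun x : Fin p → ℝ => Real.exp (-((x - μ) ⬝ᵥ Θ *ᵥ (x - μ)) / 2 + nR ⬝ᵥ x))
      (μ + Θ⁻¹ *ᵥ nR)]
    have : ∀ z : Fin p → ℝ,
        Real.exp (-(((z + (μ + Θ⁻¹ *ᵥ nR)) - μ) ⬝ᵥ Θ *ᵥ ((z + (μ + Θ⁻¹ *ᵥ nR)) - μ)) / 2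
          + nR ⬝ᵥ (z + (μ + Θ⁻¹ *ᵥ nR)))
        = Real.exp (-(z ⬝ᵥ Θ *ᵥ z) / 2) * Real.exp (nR ⬝ᵥ μ + nR ⬝ᵥ (Θ⁻¹ *ᵥ nR) / 2) := by
      intro z
      rw [← Real.exp_add, complete_square hΘ.1 (hΘ.isUnitDet hm)]
    simp_rw [this]
    rw [integral_mul_const]
  rw [step1, step2]
  ring


/-! ### arithmetic: uniqueness of `3^a + 3^b` -/

lemma three_pow_key {a b c : ℕ} (hab : a ≤ b) (h3 : 3 ^ (a+1) ∣ 3 ^ a + 3 ^ b) : False := by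
  rcases eq_or_lt_of_le hab with rfl | hlt
  · have h2 : 3 ^ a + 3 ^ a = 2 * 3 ^ a := by ring
    rw [h2, pow_succ, mul_comm (3^a) 3] at h3
    have := (Nat.mul_dvd_mul_iff_right (Nat.pow_pos (by norm_num) : 0 < 3 ^ a)).mp h3
    omega
  · have h2 : 3 ^ a + 3 ^ b = 3 ^ a * (1 + 3 ^ (b - a)) := by
      rw [Nat.mul_add, mul_one, ← pow_add]
      congr 2
      omega
    rw [h2, pow_succ, mul_comm (3^a) 3, mul_comm (3 ^ a) _] at h3
    have := (Nat.mul_dvd_mul_iff_right (Nat.pow_pos (by norm_num) : 0 < 3 ^ a)).mp h3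
    have h4 : (3:ℕ) ∣ 3 ^ (b - a) := dvd_pow_self 3 (by omega)
    omega

lemma three_pow_ord {a b c d : ℕ} (hab : a ≤ b) (hcd : c ≤ d)
    (h : 3 ^ a + 3 ^ b = 3 ^ c + 3 ^ d) : a = c ∧ b = d := by
  have hac : a = c := by
    rcases lt_trichotomy a c with hlt | he | hgt
    · exfalso
      apply three_pow_key hab (c := 0)
      rw [h]
      exact Nat.dvd_add (pow_dvd_pow 3 (by omega)) (pow_dvd_pow 3 (by omega))
    · exact he
    · exfalso
      apply three_pow_key hcd (c := 0)
      rw [← h]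
      exact Nat.dvd_add (pow_dvd_pow 3 (by omega)) (pow_dvd_pow 3 (by omega))
  subst hac
  refine ⟨rfl, ?_⟩
  have : (3:ℕ) ^ b = 3 ^ d := by omega
  exact Nat.pow_right_injective (by norm_num) this

lemma three_pow_add_eq_iff {a b c d : ℕ} :
    3 ^ a + 3 ^ b = 3 ^ c + 3 ^ d ↔ (a = c ∧ b = d) ∨ (a = d ∧ b = c) := by
  constructor
  · intro h
    rcases le_total a b with h1 | h1 <;> rcases le_total c d with h2 | h2
    · exact Or.inl (three_pow_ord h1 h2 h)
    · have h' : 3 ^ a + 3 ^ b = 3 ^ d + 3 ^ c := by omega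
      exact Or.inr (three_pow_ord h1 h2 h')
    · have h' : 3 ^ b + 3 ^ a = 3 ^ c + 3 ^ d := by omega
      obtain ⟨e1, e2⟩ := three_pow_ord h1 h2 h'
      exact Or.inr ⟨e2, e1⟩
    · have h' : 3 ^ b + 3 ^ a = 3 ^ d + 3 ^ c := by omega
      obtain ⟨e1, e2⟩ := three_pow_ord h1 h2 h'
      exact Or.inl ⟨e2, e1⟩
  · rintro (⟨rfl, rfl⟩ | ⟨rfl, rfl⟩) <;> omega

/-! ### separating vector -/

variable {p : ℕ}

/-- the separating curve `t ↦ (t^{3^j})_j`. -/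
def sepVec (t : ℕ) : Fin p → ℕ := fun j => t ^ (3 ^ (j : ℕ))

lemma eval_lin (w : Fin p → ℝ) (t : ℕ) :
    Polynomial.eval (t : ℝ) (∑ j : Fin p, Polynomial.C (w j) * Polynomial.X ^ (3 ^ (j:ℕ)))
      = (fun j => ((sepVec t j : ℕ) : ℝ)) ⬝ᵥ w := by
  rw [Polynomial.eval_finset_sum]
  unfold dotProduct
  refine Finset.sum_congr rfl fun j _ => ?_
  simp only [Polynomial.eval_mul, Polynomial.eval_C, Polynomial.eval_pow, Polynomial.eval_X,
    sepVec]
  push_cast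
  ring

lemma eval_quad (A : Matrix (Fin p) (Fin p) ℝ) (t : ℕ) :
    Polynomial.eval (t : ℝ)
        (∑ jj : Fin p × Fin p, Polynomial.C (A jj.1 jj.2) *
          Polynomial.X ^ (3 ^ (jj.1 : ℕ) + 3 ^ (jj.2 : ℕ)))
      = (fun j => ((sepVec t j : ℕ) : ℝ)) ⬝ᵥ A *ᵥ (fun j => ((sepVec t j : ℕ) : ℝ)) := by
  have L : Polynomial.eval (t:ℝ) (∑ jj : Fin p × Fin p, Polynomial.C (A jj.1 jj.2) *
        Polynomial.X ^ (3 ^ (jj.1 : ℕ) + 3 ^ (jj.2 : ℕ)))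
      = ∑ jj : Fin p × Fin p, A jj.1 jj.2 * (t:ℝ) ^ (3 ^ (jj.1:ℕ) + 3 ^ (jj.2:ℕ)) := by
    rw [Polynomial.eval_finset_sum]
    refine Finset.sum_congr rfl fun jj _ => ?_
    simp
  have R : (fun j => ((sepVec t j : ℕ) : ℝ)) ⬝ᵥ A *ᵥ (fun j => ((sepVec t j : ℕ) : ℝ))
      = ∑ jj : Fin p × Fin p, A jj.1 jj.2 * (t:ℝ) ^ (3 ^ (jj.1:ℕ) + 3 ^ (jj.2:ℕ)) := by
    simp only [dotProduct, Matrix.mulVec, Finset.mul_sum]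
    rw [← Finset.univ_product_univ, Finset.sum_product]
    refine Finset.sum_congr rfl fun j _ => Finset.sum_congr rfl fun j' _ => ?_
    simp only [sepVec]
    push_cast
    rw [pow_add]
    ring
  rw [L, R]

lemma coeff_term (c : ℝ) (e k : ℕ) :
    (Polynomial.C c * Polynomial.X ^ e).coeff k = if e = k then c else 0 := by
  by_cases h : e = k
  · simp [h, Polynomial.coeff_X_pow, Polynomial.coeff_C_mul]
  · simp [Polynomial.coeff_X_pow, Polynomial.coeff_C_mul, h, Ne.symm h]

lemma lin_poly_ne_zero {w : Fin p → ℝ} (hw : w ≠ 0) :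
    (∑ j : Fin p, Polynomial.C (w j) * Polynomial.X ^ (3 ^ (j:ℕ))) ≠ 0 := by
  obtain ⟨j₀, hj₀⟩ := Function.ne_iff.mp hw
  intro hc
  have hcf := congrArg (Polynomial.coeff · (3 ^ (j₀ : ℕ))) hc
  simp only [Polynomial.finset_sum_coeff, coeff_term, Polynomial.coeff_zero] at hcf
  rw [Finset.sum_eq_single j₀] at hcf
  · simp only [if_pos rfl] at hcf
    exact hj₀ (by simpa using hcf)
  · intro b _ hb
    have hne : (3:ℕ) ^ (b:ℕ) ≠ 3 ^ (j₀:ℕ) := fun he =>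
      hb (Fin.ext (Nat.pow_right_injective (by norm_num) he))
    simp [hne]
  · intro h
    exact absurd (Finset.mem_univ j₀) h

lemma quad_poly_ne_zero {A : Matrix (Fin p) (Fin p) ℝ} (hA : A ≠ 0) (hsymm : A.IsSymm) :
    (∑ jj : Fin p × Fin p, Polynomial.C (A jj.1 jj.2) *
      Polynomial.X ^ (3 ^ (jj.1 : ℕ) + 3 ^ (jj.2 : ℕ))) ≠ 0 := by
  have hex : ∃ jj : Fin p × Fin p, A jj.1 jj.2 ≠ 0 := by
    by_contra hc
    push_neg at hc
    exact hA (by ext i j; exact hc (i, j))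
  obtain ⟨⟨j₀, j₀'⟩, hj₀⟩ := hex
  intro hc
  have hcf := congrArg (Polynomial.coeff · (3 ^ (j₀ : ℕ) + 3 ^ (j₀' : ℕ))) hc
  simp only [Polynomial.finset_sum_coeff, coeff_term, Polynomial.coeff_zero] at hcf
  have hiff : ∀ jj : Fin p × Fin p,
      (3 ^ (jj.1:ℕ) + 3 ^ (jj.2:ℕ) = 3 ^ (j₀:ℕ) + 3 ^ (j₀':ℕ))
        ↔ (jj = (j₀, j₀') ∨ jj = (j₀', j₀)) := by
    rintro ⟨a, b⟩
    rw [three_pow_add_eq_iff]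
    constructor
    · rintro (⟨h1, h2⟩ | ⟨h1, h2⟩)
      · exact Or.inl (Prod.ext (Fin.ext h1) (Fin.ext h2))
      · exact Or.inr (Prod.ext (Fin.ext h1) (Fin.ext h2))
    · rintro (h | h) <;> (cases h; simp)
  rw [Finset.sum_congr rfl (fun jj _ => by rw [if_congr (hiff jj) rfl rfl])] at hcf
  by_cases hjj : j₀ = j₀'
  · subst hjj
    rw [Finset.sum_congr rfl (fun jj _ =>
        by rw [if_congr (or_self_iff (a := jj = (j₀, j₀))) rfl rfl]),
      Finset.sum_ite_eq' Finset.univ ((j₀, j₀) : Fin p × Fin p) (fun jj => A jj.1 jj.2)] at hcf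
    simp at hcf
    exact hj₀ hcf
  · have hsplit : ∀ jj : Fin p × Fin p,
        (if jj = (j₀, j₀') ∨ jj = (j₀', j₀) then A jj.1 jj.2 else 0)
          = (if jj = (j₀, j₀') then A jj.1 jj.2 else 0)
            + (if jj = (j₀', j₀) then A jj.1 jj.2 else 0) := by
      intro jj
      by_cases h1 : jj = (j₀, j₀')
      · have h2 : jj ≠ (j₀', j₀) := by
          rw [h1]
          intro h
          exact hjj ((Prod.mk.injEq _ _ _ _).mp h).1
        simp only [h1, h2, if_true, if_false, or_false]
        simp
        exact fun h _ => absurd h hjj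
      · by_cases h2 : jj = (j₀', j₀)
        · simp only [h1, h2, if_false, if_true, false_or]
          simp
          exact fun h _ => absurd h (fun hh => hjj hh.symm)
        · simp [h1, h2]
    rw [Finset.sum_congr rfl (fun jj _ => hsplit jj), Finset.sum_add_distrib,
      Finset.sum_ite_eq' Finset.univ ((j₀, j₀') : Fin p × Fin p) (fun jj => A jj.1 jj.2),
      Finset.sum_ite_eq' Finset.univ ((j₀', j₀) : Fin p × Fin p) (fun jj => A jj.1 jj.2)] at hcf
    simp only [Finset.mem_univ, if_pos] at hcf
    have hAsymm : A j₀' j₀ = A j₀ j₀' := by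
      have := congrFun (congrFun hsymm j₀') j₀
      simpa [Matrix.transpose_apply] using this.symm
    rw [hAsymm] at hcf
    have : A j₀ j₀' = 0 := by linarith
    exact hj₀ this

/-- existence of a separating integer vector. -/
lemma exists_sep {ι : Type*} (T : Finset ι) (μs : ι → Fin p → ℝ)
    (Ss : ι → Matrix (Fin p) (Fin p) ℝ) (hsymm : ∀ i ∈ T, (Ss i).IsSymm)
    (hdist : ∀ i ∈ T, ∀ i' ∈ T, i ≠ i' → (μs i, Ss i) ≠ (μs i', Ss i')) :
    ∃ v : Fin p → ℕ, ∀ i ∈ T, ∀ i' ∈ T, i ≠ i' →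
      ((fun j => ((v j : ℕ) : ℝ)) ⬝ᵥ (Ss i) *ᵥ (fun j => ((v j : ℕ) : ℝ)),
        (fun j => ((v j : ℕ) : ℝ)) ⬝ᵥ μs i)
      ≠ ((fun j => ((v j : ℕ) : ℝ)) ⬝ᵥ (Ss i') *ᵥ (fun j => ((v j : ℕ) : ℝ)),
        (fun j => ((v j : ℕ) : ℝ)) ⬝ᵥ μs i') := by
  classical
  set Bad : ι → ι → Set ℕ := fun i i' =>
    {t : ℕ | ((fun j => ((sepVec t j : ℕ) : ℝ)) ⬝ᵥ (Ss i) *ᵥ (fun j => ((sepVec t j : ℕ) : ℝ)),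
        (fun j => ((sepVec t j : ℕ) : ℝ)) ⬝ᵥ μs i)
      = ((fun j => ((sepVec t j : ℕ) : ℝ)) ⬝ᵥ (Ss i') *ᵥ (fun j => ((sepVec t j : ℕ) : ℝ)),
        (fun j => ((sepVec t j : ℕ) : ℝ)) ⬝ᵥ μs i')} with hBad
  have hfin : ∀ i ∈ T, ∀ i' ∈ T, i ≠ i' → (Bad i i').Finite := by
    intro i hi i' hi' hne
    by_cases hmu : μs i ≠ μs i'
    · have hwne : μs i - μs i' ≠ 0 := sub_ne_zero_of_ne hmu
      have hpne := lin_poly_ne_zero hwne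
      apply Set.Finite.subset ((Polynomial.finite_setOf_isRoot hpne).preimage
        ((Nat.cast_injective (R := ℝ)).injOn))
      intro t ht
      simp only [hBad, Set.mem_setOf_eq, Prod.mk.injEq] at ht
      simp only [Set.mem_preimage, Set.mem_setOf_eq, Polynomial.IsRoot, eval_lin]
      rw [dotProduct_sub, ht.2, sub_self]
    · push_neg at hmu
      have hSne : Ss i - Ss i' ≠ 0 := by
        intro h0
        exact hdist i hi i' hi' hne (Prod.ext hmu (sub_eq_zero.mp h0))
      have hAsymm : (Ss i - Ss i').IsSymm := by
        unfold Matrix.IsSymm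
        rw [Matrix.transpose_sub, (hsymm i hi).eq, (hsymm i' hi').eq]
      have hpne := quad_poly_ne_zero hSne hAsymm
      apply Set.Finite.subset ((Polynomial.finite_setOf_isRoot hpne).preimage
        ((Nat.cast_injective (R := ℝ)).injOn))
      intro t ht
      simp only [hBad, Set.mem_setOf_eq, Prod.mk.injEq] at ht
      simp only [Set.mem_preimage, Set.mem_setOf_eq, Polynomial.IsRoot, eval_quad]
      rw [Matrix.sub_mulVec, dotProduct_sub, ht.1, sub_self]
  have hUfin : (⋃ i ∈ T, ⋃ i' ∈ T, if i = i' then (∅ : Set ℕ) else Bad i i').Finite := by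
    apply Set.Finite.biUnion T.finite_toSet
    intro i hi
    apply Set.Finite.biUnion T.finite_toSet
    intro i' hi'
    by_cases h : i = i'
    · simp [h]
    · simpa only [if_neg h] using hfin i hi i' hi' h
  obtain ⟨t, ht⟩ := hUfin.infinite_compl.nonempty
  refine ⟨sepVec t, ?_⟩
  intro i hi i' hi' hne hcontra
  apply ht
  simp only [Set.mem_iUnion]
  exact ⟨i, hi, i', hi', by rw [if_neg hne]; exact hcontra⟩
/-- `a k² + b k → -∞` when `(a,b) < (0,0)` lexicographically. -/
lemma tendsto_quad_atBot {a b : ℝ} (h : a < 0 ∨ (a = 0 ∧ b < 0)) :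
    Tendsto (fun k : ℕ => a * (k : ℝ) ^ 2 + b * k) atTop atBot := by
  rcases h with ha | ⟨ha, hb⟩
  · have h1 : Tendsto (fun k : ℕ => (k : ℝ)) atTop atTop := tendsto_natCast_atTop_atTop
    have h2 : Tendsto (fun k : ℕ => a * (k : ℝ) + b) atTop atBot := by
      apply tendsto_atBot_add_const_right
      exact h1.const_mul_atTop_of_neg ha
    have h3 : Tendsto (fun k : ℕ => (a * (k : ℝ) + b) * k) atTop atBot :=
      h2.atBot_mul_atTop₀ h1
    refine h3.congr fun k => by ring
  · subst ha
    have h1 : Tendsto (fun k : ℕ => (k : ℝ)) atTop atTop := tendsto_natCast_atTop_atTop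
    have h2 : Tendsto (fun k : ℕ => b * (k : ℝ)) atTop atBot := h1.const_mul_atTop_of_neg hb
    refine h2.congr fun k => by ring
  
/-- 1-D linear independence of exponentials of distinct quadratics. -/
lemma li1 {ι : Type*} [DecidableEq ι] :
    ∀ (N : ℕ) (T : Finset ι), T.card = N → ∀ (q l c : ι → ℝ),
      (∀ i ∈ T, ∀ i' ∈ T, i ≠ i' → (q i, l i) ≠ (q i', l i')) →
      (∀ k : ℕ, ∑ i ∈ T, c i * Real.exp (q i * (k:ℝ)^2 + l i * k) = 0) →
      ∀ i ∈ T, c i = 0 := by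
  intro N
  induction N with
  | zero =>
    intro T hT q l c _ _ i hi
    rw [Finset.card_eq_zero.mp hT] at hi
    exact absurd hi (Finset.notMem_empty i)
  | succ N ih =>
    intro T hT q l c hdist h i hi
    have hne : T.Nonempty := ⟨i, hi⟩
    obtain ⟨i₀, hi₀, hmax⟩ := T.exists_max_image (fun i => toLex (q i, l i)) hne
    -- c i₀ = 0
    have hkey : ∀ i' ∈ T.erase i₀, (q i' < q i₀ ∨ (q i' = q i₀ ∧ l i' < l i₀)) := by
      intro i' hi'
      have h1 : i' ≠ i₀ := Finset.ne_of_mem_erase hi'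
      have h2 : i' ∈ T := Finset.mem_of_mem_erase hi'
      have h3 : (q i', l i') ≠ (q i₀, l i₀) := hdist i' h2 i₀ hi₀ h1
      have h4 : toLex (q i', l i') ≤ toLex (q i₀, l i₀) := hmax i' h2
      have h5 : toLex (q i', l i') < toLex (q i₀, l i₀) :=
        lt_of_le_of_ne h4 (fun hc => h3 (by simpa using congrArg ofLex hc))
      rcases Prod.Lex.lt_iff.mp h5 with h6 | h6
      · exact Or.inl h6
      · exact Or.inr h6
    have hc0 : c i₀ = 0 := by
      have hrepr : ∀ k : ℕ, c i₀ = ∑ i' ∈ T.erase i₀,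
          -(c i') * Real.exp ((q i' - q i₀) * (k:ℝ)^2 + (l i' - l i₀) * k) := by
        intro k
        have h0 := h k
        rw [← Finset.add_sum_erase T _ hi₀] at h0
        have h1 : c i₀ * Real.exp (q i₀ * (k:ℝ)^2 + l i₀ * k)
            = - ∑ i' ∈ T.erase i₀, c i' * Real.exp (q i' * (k:ℝ)^2 + l i' * k) := by
          linarith
        have h2 := congrArg (· * Real.exp (-(q i₀ * (k:ℝ)^2 + l i₀ * k))) h1
        rw [mul_assoc, ← Real.exp_add, add_neg_cancel, Real.exp_zero, mul_one] at h2
        rw [h2, ← Finset.sum_neg_distrib, Finset.sum_mul]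
        refine Finset.sum_congr rfl fun i' _ => ?_
        rw [neg_mul, neg_mul, mul_assoc, ← Real.exp_add]
        ring_nf
      have hlim : Tendsto (fun k : ℕ => ∑ i' ∈ T.erase i₀,
          -(c i') * Real.exp ((q i' - q i₀) * (k:ℝ)^2 + (l i' - l i₀) * k)) atTop
          (nhds 0) := by
        have : Tendsto (fun k : ℕ => ∑ i' ∈ T.erase i₀,
            -(c i') * Real.exp ((q i' - q i₀) * (k:ℝ)^2 + (l i' - l i₀) * k)) atTop
            (nhds (∑ i' ∈ T.erase i₀, (0:ℝ))) := by
          apply tendsto_finset_sum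
          intro i' hi'
          have harg : Tendsto (fun k : ℕ => (q i' - q i₀) * (k:ℝ)^2 + (l i' - l i₀) * k)
              atTop atBot := by
            apply tendsto_quad_atBot
            rcases hkey i' hi' with h6 | ⟨h6, h7⟩
            · exact Or.inl (by linarith)
            · exact Or.inr ⟨by linarith, by linarith⟩
          have hexp : Tendsto (fun k : ℕ =>
              Real.exp ((q i' - q i₀) * (k:ℝ)^2 + (l i' - l i₀) * k)) atTop (nhds 0) :=
            Real.tendsto_exp_atBot.comp harg
          simpa using hexp.const_mul (-(c i'))
        simpa using this
      exact tendsto_nhds_unique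
        ((tendsto_const_nhds (x := c i₀) (f := atTop (α := ℕ))).congr (fun k => hrepr k)) hlim
    -- now conclude
    rcases eq_or_ne i i₀ with rfl | hii₀
    · exact hc0
    · have hcard : (T.erase i₀).card = N := by
        rw [Finset.card_erase_of_mem hi₀, hT]
        rfl
      have hdist' : ∀ a ∈ T.erase i₀, ∀ b ∈ T.erase i₀, a ≠ b → (q a, l a) ≠ (q b, l b) :=
        fun a ha b hb hab =>
          hdist a (Finset.mem_of_mem_erase ha) b (Finset.mem_of_mem_erase hb) hab
      have h' : ∀ k : ℕ, ∑ i' ∈ T.erase i₀,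
          c i' * Real.exp (q i' * (k:ℝ)^2 + l i' * k) = 0 := by
        intro k
        have h0 := h k
        rw [← Finset.add_sum_erase T _ hi₀, hc0, zero_mul, zero_add] at h0
        exact h0
      exact ih (T.erase i₀) hcard q l c hdist' h' i (Finset.mem_erase.mpr ⟨hii₀, hi⟩)

/-- multi-dimensional linear independence. -/
lemma li {p : ℕ} {ι : Type*} [DecidableEq ι] (T : Finset ι) (μs : ι → Fin p → ℝ)
    (Ss : ι → Matrix (Fin p) (Fin p) ℝ) (c : ι → ℝ)
    (hsymm : ∀ i ∈ T, (Ss i).IsSymm)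
    (hdist : ∀ i ∈ T, ∀ i' ∈ T, i ≠ i' → (μs i, Ss i) ≠ (μs i', Ss i'))
    (h : ∀ n : Fin p → ℕ, ∑ i ∈ T, c i * Real.exp ((fun j => ((n j : ℕ) : ℝ)) ⬝ᵥ μs i
      + (fun j => ((n j : ℕ) : ℝ)) ⬝ᵥ (Ss i *ᵥ (fun j => ((n j : ℕ) : ℝ))) / 2) = 0) :
    ∀ i ∈ T, c i = 0 := by
  obtain ⟨v, hv⟩ := exists_sep T μs Ss hsymm hdist
  set vR : Fin p → ℝ := fun j => ((v j : ℕ) : ℝ) with hvR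
  apply li1 T.card T rfl (fun i => vR ⬝ᵥ (Ss i *ᵥ vR) / 2) (fun i => vR ⬝ᵥ μs i) c
  · intro i hi i' hi' hne hceq
    apply hv i hi i' hi' hne
    have h1 : vR ⬝ᵥ (Ss i *ᵥ vR) / 2 = vR ⬝ᵥ (Ss i' *ᵥ vR) / 2 := congrArg Prod.fst hceq
    have h2 : vR ⬝ᵥ μs i = vR ⬝ᵥ μs i' := congrArg Prod.snd hceq
    exact Prod.ext (by linarith) h2
  · intro k
    have h0 := h (fun j => k * v j)
    have harg : ∀ i : ι, (fun j => (((k * v j : ℕ)) : ℝ)) ⬝ᵥ μs i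
        + (fun j => (((k * v j : ℕ)) : ℝ)) ⬝ᵥ (Ss i *ᵥ (fun j => (((k * v j : ℕ)) : ℝ))) / 2
        = (vR ⬝ᵥ (Ss i *ᵥ vR) / 2) * (k:ℝ)^2 + (vR ⬝ᵥ μs i) * k := by
      intro i
      have hcast : (fun j => (((k * v j : ℕ)) : ℝ)) = (k : ℝ) • vR := by
        funext j
        simp only [Pi.smul_apply, smul_eq_mul, hvR]
        push_cast
        ring
      rw [hcast, smul_dotProduct, smul_dotProduct, Matrix.mulVec_smul,
        dotProduct_smul]
      simp only [smul_eq_mul]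
      ring
    simp_rw [harg] at h0
    exact h0

variable {p : ℕ} {m M : ℝ}

/-- the normalizing factor of the transform. -/
def kap {p : ℕ} (Θ : Matrix (Fin p) (Fin p) ℝ) : ℝ :=
  (2 * Real.pi) ^ (-(p : ℝ) / 2) * Real.sqrt Θ.det *
    ∫ z : Fin p → ℝ, Real.exp (-(z ⬝ᵥ Θ *ᵥ z) / 2)

lemma kap_pos {Θ : Matrix (Fin p) (Fin p) ℝ} (hΘ : eigBounds m M Θ) (hm : 0 < m) :
    0 < kap Θ := by
  have hdet : (0:ℝ) < Θ.det := (hΘ.posDef hm).det_pos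
  have hrpow : (0:ℝ) < (2 * Real.pi) ^ (-(p : ℝ) / 2) :=
    Real.rpow_pos_of_pos (by positivity) _
  have hint : Integrable fun z : Fin p → ℝ => Real.exp (-(z ⬝ᵥ Θ *ᵥ z) / 2) := by
    refine (integrable_exp_gauss hΘ hm 0 0).congr (ae_of_all _ fun z => ?_)
    simp
  have hpos : 0 < ∫ z : Fin p → ℝ, Real.exp (-(z ⬝ᵥ Θ *ᵥ z) / 2) := by
    rw [integral_pos_iff_support_of_nonneg_ae (ae_of_all _ fun z => (Real.exp_pos _).le) hint]
    have hsupp : Function.support (fun z : Fin p → ℝ => Real.exp (-(z ⬝ᵥ Θ *ᵥ z) / 2))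
        = Set.univ := Set.eq_univ_of_forall fun z => (Real.exp_pos _).ne'
    rw [hsupp]
    exact isOpen_univ.measure_pos volume ⟨0, Set.mem_univ 0⟩
  unfold kap
  positivity

lemma inv_symm {Θ : Matrix (Fin p) (Fin p) ℝ} (hΘ : eigBounds m M Θ) : (Θ⁻¹).IsSymm := by
  unfold Matrix.IsSymm
  rw [Matrix.transpose_nonsing_inv, hΘ.1.eq]


end

end PLNAux

open Matrix

/-- Identifiability of the mixture Poisson log-normal model: if two mixture Poisson
log-normal densities agree pointwise on ℕᵖ, with both sets of parameters satisfying
Conditions (C1) and (C3) and strictly positive mixing proportions, then the numbers of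
components agree and the parameters agree up to a permutation. -/
theorem stmt0 {p : ℕ} (hp : 0 < p) {m M : ℝ} (hm : 0 < m) (hmM : m < M)
    {G G' : ℕ} (hG : 0 < G) (hG' : 0 < G')
    (pw₁ : Fin G → ℝ) (μ₁ : Fin G → Fin p → ℝ) (Θ₁ : Fin G → Matrix (Fin p) (Fin p) ℝ)
    (pw₂ : Fin G' → ℝ) (μ₂ : Fin G' → Fin p → ℝ) (Θ₂ : Fin G' → Matrix (Fin p) (Fin p) ℝ)
    (hpw₁ : ∀ g, 0 < pw₁ g) (hpw₂ : ∀ g, 0 < pw₂ g)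
    (hsum₁ : ∑ g, pw₁ g = 1) (hsum₂ : ∑ g, pw₂ g = 1)
    (hC1₁ : ∀ g, eigBounds m M (Θ₁ g)) (hC1₂ : ∀ g, eigBounds m M (Θ₂ g))
    (hC3₁ : (∀ g, ‖μ₁ g‖ ≤ M) ∧ Function.Injective μ₁)
    (hC3₂ : (∀ g, ‖μ₂ g‖ ≤ M) ∧ Function.Injective μ₂)
    (heq : ∀ y : Fin p → ℕ,
      ∑ g, pw₁ g * plnDensity (Θ₁ g) (μ₁ g) y = ∑ g, pw₂ g * plnDensity (Θ₂ g) (μ₂ g) y) :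
    G = G' ∧ ∃ σ : Fin G' ≃ Fin G, ∀ g : Fin G',
      pw₂ g = pw₁ (σ g) ∧ μ₂ g = μ₁ (σ g) ∧ Θ₂ g = Θ₁ (σ g) := by
  classical
  set par₁ : Fin G → (Fin p → ℝ) × Matrix (Fin p) (Fin p) ℝ :=
    fun g => (μ₁ g, (Θ₁ g)⁻¹) with hpar₁
  set par₂ : Fin G' → (Fin p → ℝ) × Matrix (Fin p) (Fin p) ℝ :=
    fun g => (μ₂ g, (Θ₂ g)⁻¹) with hpar₂
  set E : ((Fin p → ℝ) × Matrix (Fin p) (Fin p) ℝ) → (Fin p → ℕ) → ℝ := fun t n =>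
    Real.exp ((fun j => ((n j : ℕ) : ℝ)) ⬝ᵥ t.1
      + (fun j => ((n j : ℕ) : ℝ)) ⬝ᵥ (t.2 *ᵥ (fun j => ((n j : ℕ) : ℝ))) / 2) with hE
  -- transform equality
  have htrans : ∀ n : Fin p → ℕ,
      ∑ g, pw₁ g * (kap (Θ₁ g) * E (par₁ g) n) = ∑ g, pw₂ g * (kap (Θ₂ g) * E (par₂ g) n) := by
    intro n
    have h₁ : HasSum (fun y : Fin p → ℕ =>
        ∑ g, pw₁ g * ((∏ j, fallFact (y j) (n j)) * plnDensity (Θ₁ g) (μ₁ g) y))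
        (∑ g, pw₁ g * (kap (Θ₁ g) * E (par₁ g) n)) := by
      apply hasSum_sum
      intro g _
      exact (transform_hasSum (hC1₁ g) hm (μ₁ g) n).mul_left (pw₁ g)
    have h₂ : HasSum (fun y : Fin p → ℕ =>
        ∑ g, pw₂ g * ((∏ j, fallFact (y j) (n j)) * plnDensity (Θ₂ g) (μ₂ g) y))
        (∑ g, pw₂ g * (kap (Θ₂ g) * E (par₂ g) n)) := by
      apply hasSum_sum
      intro g _
      exact (transform_hasSum (hC1₂ g) hm (μ₂ g) n).mul_left (pw₂ g)
    have hfe : (fun y : Fin p → ℕ =>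
        ∑ g, pw₁ g * ((∏ j, fallFact (y j) (n j)) * plnDensity (Θ₁ g) (μ₁ g) y))
        = fun y : Fin p → ℕ =>
        ∑ g, pw₂ g * ((∏ j, fallFact (y j) (n j)) * plnDensity (Θ₂ g) (μ₂ g) y) := by
      funext y
      have h3 : ∀ {G₀ : ℕ} (pw : Fin G₀ → ℝ) (Θs : Fin G₀ → Matrix (Fin p) (Fin p) ℝ)
          (μs : Fin G₀ → Fin p → ℝ),
          ∑ g, pw g * ((∏ j, fallFact (y j) (n j)) * plnDensity (Θs g) (μs g) y)
          = (∏ j, fallFact (y j) (n j)) * ∑ g, pw g * plnDensity (Θs g) (μs g) y := by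
        intro G₀ pw Θs μs
        rw [Finset.mul_sum]
        exact Finset.sum_congr rfl fun g _ => by ring
      rw [h3, h3, heq y]
    rw [hfe] at h₁
    exact h₁.unique h₂
  -- the combined coefficient function
  set T : Finset ((Fin p → ℝ) × Matrix (Fin p) (Fin p) ℝ) :=
    (Finset.univ.image par₁) ∪ (Finset.univ.image par₂) with hT
  set c : ((Fin p → ℝ) × Matrix (Fin p) (Fin p) ℝ) → ℝ := fun t =>
    (∑ g ∈ Finset.univ.filter (fun g => par₁ g = t), pw₁ g * kap (Θ₁ g))
      - (∑ g ∈ Finset.univ.filter (fun g => par₂ g = t), pw₂ g * kap (Θ₂ g)) with hc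
  have hczero : ∀ t ∈ T, c t = 0 := by
    apply li T Prod.fst Prod.snd c
    · -- symmetry
      intro t ht
      rw [hT, Finset.mem_union] at ht
      rcases ht with ht | ht <;> obtain ⟨g, _, rfl⟩ := Finset.mem_image.mp ht
      · exact inv_symm (hC1₁ g)
      · exact inv_symm (hC1₂ g)
    · intro t _ t' _ hne hcontra
      exact hne (Prod.ext (congrArg Prod.fst hcontra) (congrArg Prod.snd hcontra))
    · -- the sum identity
      intro n
      have hside : ∀ {G₀ : ℕ} (pw : Fin G₀ → ℝ) (Θs : Fin G₀ → Matrix (Fin p) (Fin p) ℝ)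
          (par : Fin G₀ → (Fin p → ℝ) × Matrix (Fin p) (Fin p) ℝ)
          (hmap : ∀ g, par g ∈ T),
          ∑ t ∈ T, (∑ g ∈ Finset.univ.filter (fun g => par g = t), pw g * kap (Θs g)) * E t n
            = ∑ g, pw g * (kap (Θs g) * E (par g) n) := by
        intro G₀ pw Θs par hmap
        have h1 : ∀ t ∈ T, (∑ g ∈ Finset.univ.filter (fun g => par g = t),
            pw g * kap (Θs g)) * E t n
            = ∑ g ∈ Finset.univ.filter (fun g => par g = t),
              pw g * (kap (Θs g) * E (par g) n) := by
          intro t _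
          rw [Finset.sum_mul]
          refine Finset.sum_congr rfl fun g hg => ?_
          rw [(Finset.mem_filter.mp hg).2]
          ring
        rw [Finset.sum_congr rfl h1]
        exact Finset.sum_fiberwise_of_maps_to (fun g _ => hmap g) _
      have hmap₁ : ∀ g, par₁ g ∈ T := fun g => by
        rw [hT, Finset.mem_union]
        exact Or.inl (Finset.mem_image_of_mem par₁ (Finset.mem_univ g))
      have hmap₂ : ∀ g, par₂ g ∈ T := fun g => by
        rw [hT, Finset.mem_union]
        exact Or.inr (Finset.mem_image_of_mem par₂ (Finset.mem_univ g))
      have hexpand : ∀ t ∈ T, c t * Real.exp ((fun j => ((n j : ℕ) : ℝ)) ⬝ᵥ t.1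
          + (fun j => ((n j : ℕ) : ℝ)) ⬝ᵥ (t.2 *ᵥ (fun j => ((n j : ℕ) : ℝ))) / 2)
          = (∑ g ∈ Finset.univ.filter (fun g => par₁ g = t), pw₁ g * kap (Θ₁ g)) * E t n
            - (∑ g ∈ Finset.univ.filter (fun g => par₂ g = t), pw₂ g * kap (Θ₂ g)) * E t n := by
        intro t _
        rw [hc]
        simp only [hE]
        ring
      rw [Finset.sum_congr rfl hexpand, Finset.sum_sub_distrib,
        hside pw₁ Θ₁ par₁ hmap₁, hside pw₂ Θ₂ par₂ hmap₂, htrans n, sub_self]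
  -- extract the matching
  have hfilter₂ : ∀ g' : Fin G', Finset.univ.filter (fun g => par₂ g = par₂ g') = {g'} := by
    intro g'
    ext x
    simp only [Finset.mem_filter, Finset.mem_univ, true_and, Finset.mem_singleton]
    constructor
    · intro hx
      exact hC3₂.2 (congrArg Prod.fst hx)
    · rintro rfl; rfl
  have hfilter₁ : ∀ g : Fin G, Finset.univ.filter (fun x => par₁ x = par₁ g) = {g} := by
    intro g
    ext x
    simp only [Finset.mem_filter, Finset.mem_univ, true_and, Finset.mem_singleton]
    constructor
    · intro hx
      exact hC3₁.2 (congrArg Prod.fst hx)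
    · rintro rfl; rfl
  have key : ∀ g' : Fin G', ∃ g : Fin G, par₁ g = par₂ g'
      ∧ pw₁ g * kap (Θ₁ g) = pw₂ g' * kap (Θ₂ g') := by
    intro g'
    have ht : par₂ g' ∈ T := by
      rw [hT, Finset.mem_union]
      exact Or.inr (Finset.mem_image_of_mem par₂ (Finset.mem_univ g'))
    have hz := hczero (par₂ g') ht
    rw [hc] at hz
    simp only [hfilter₂ g', Finset.sum_singleton] at hz
    have hpos : 0 < pw₂ g' * kap (Θ₂ g') :=
      mul_pos (hpw₂ g') (kap_pos (hC1₂ g') hm)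
    have hsumpos : 0 < ∑ g ∈ Finset.univ.filter (fun g => par₁ g = par₂ g'),
        pw₁ g * kap (Θ₁ g) := by linarith
    have hne : (Finset.univ.filter (fun g => par₁ g = par₂ g')).Nonempty := by
      by_contra hcon
      rw [Finset.not_nonempty_iff_eq_empty.mp hcon, Finset.sum_empty] at hsumpos
      exact lt_irrefl 0 hsumpos
    obtain ⟨g, hg⟩ := hne
    have hgeq : par₁ g = par₂ g' := (Finset.mem_filter.mp hg).2
    refine ⟨g, hgeq, ?_⟩
    have : Finset.univ.filter (fun x => par₁ x = par₂ g') = {g} := by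
      rw [← hgeq]
      exact hfilter₁ g
    rw [this, Finset.sum_singleton] at hz
    linarith
  have key' : ∀ g : Fin G, ∃ g' : Fin G', par₂ g' = par₁ g := by
    intro g
    have ht : par₁ g ∈ T := by
      rw [hT, Finset.mem_union]
      exact Or.inl (Finset.mem_image_of_mem par₁ (Finset.mem_univ g))
    have hz := hczero (par₁ g) ht
    rw [hc] at hz
    simp only [hfilter₁ g, Finset.sum_singleton] at hz
    have hpos : 0 < pw₁ g * kap (Θ₁ g) := mul_pos (hpw₁ g) (kap_pos (hC1₁ g) hm)
    have hne : (Finset.univ.filter (fun g' => par₂ g' = par₁ g)).Nonempty := by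
      by_contra hcon
      rw [Finset.not_nonempty_iff_eq_empty.mp hcon] at hz
      simp at hz
      rcases hz with h | h
      · exact (hpw₁ g).ne' h
      · exact (kap_pos (hC1₁ g) hm).ne' h
    obtain ⟨g', hg'⟩ := hne
    exact ⟨g', (Finset.mem_filter.mp hg').2⟩
  -- build the bijection
  choose σ hσ hσpw using key
  choose τ hτ using key'
  have hσinj : Function.Injective σ := by
    intro a b hab
    have : par₂ a = par₂ b := by rw [← hσ a, ← hσ b, hab]
    exact hC3₂.2 (congrArg Prod.fst this)
  have hτinj : Function.Injective τ := by
    intro a b hab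
    have : par₁ a = par₁ b := by rw [← hτ a, ← hτ b, hab]
    exact hC3₁.2 (congrArg Prod.fst this)
  have hGG' : G = G' := by
    have h1 : G' ≤ G := by simpa using Fintype.card_le_of_injective σ hσinj
    have h2 : G ≤ G' := by simpa using Fintype.card_le_of_injective τ hτinj
    omega
  refine ⟨hGG', ?_⟩
  have hbij : Function.Bijective σ :=
    (Fintype.bijective_iff_injective_and_card σ).mpr ⟨hσinj, by simp [hGG']⟩
  refine ⟨Equiv.ofBijective σ hbij, ?_⟩
  intro g'
  have hpareq := hσ g'
  have hmueq : μ₁ (σ g') = μ₂ g' := congrArg Prod.fst hpareq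
  have hSeq : (Θ₁ (σ g'))⁻¹ = (Θ₂ g')⁻¹ := congrArg Prod.snd hpareq
  have hTheq : Θ₂ g' = Θ₁ (σ g') := by
    have h1 := congrArg (fun A => A⁻¹) hSeq
    rwa [Matrix.nonsing_inv_nonsing_inv _ ((hC1₁ (σ g')).isUnitDet hm),
      Matrix.nonsing_inv_nonsing_inv _ ((hC1₂ g').isUnitDet hm), eq_comm] at h1
  have hpweq : pw₂ g' = pw₁ (σ g') := by
    have h1 := hσpw g'
    rw [hTheq] at h1
    have hk : kap (Θ₁ (σ g')) ≠ 0 := (kap_pos (hC1₁ (σ g')) hm).ne'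
    field_simp at h1
    linarith
  exact ⟨hpweq, hmueq.symm, hTheq⟩
end

section
/- One-dimensional dominating function lemma: let 0<m<M, θ ∈ [m,M] and |μ| ≤ M, and define f¹(y,θ,μ) = ∫_ℝ exp(−θ(x−μ)²/2) exp(−exp(x)) exp(xy) dx for y ∈ ℕ. Then there exist a constant C > 0 depending only on m and M, and a threshold Y₀ ∈ ℕ, such that for every integer y ≥ Y₀ and all such θ, μ, f¹(y,θ,μ) ≥ C exp( y·log(y+1)/2 ). -/
open MeasureTheory Filter

open MeasureTheory Filter

lemma integrable_rexp_quad {b : ℝ} (hb : 0 < b) (c : ℝ) :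
    Integrable fun x : ℝ => Real.exp (-b * x ^ 2 + c * x) := by
  have h := (integrable_cexp_quadratic (b := (b : ℂ)) (by simpa using hb) (c : ℂ) 0).norm
  refine h.congr (Filter.Eventually.of_forall fun x => ?_)
  show ‖Complex.exp _‖ = _
  rw [show (-(b:ℂ) * (x:ℂ) ^ 2 + (c:ℂ) * (x:ℂ) + 0) = ((-b * x ^ 2 + c * x : ℝ) : ℂ) by
    push_cast; ring]
  rw [Complex.norm_exp, Complex.ofReal_re]

set_option maxHeartbeats 1000000 in
/-- One-dimensional dominating function lemma: for θ ∈ [m,M] and |μ| ≤ M, the integral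
f¹(y,θ,μ) = ∫ exp(−θ(x−μ)²/2) exp(−exp(x)) exp(xy) dx is bounded below by
C·exp(y·log(y+1)/2) for all large enough integers y, with C > 0 depending only on m, M. -/
theorem stmt5 {m M : ℝ} (hm : 0 < m) (hmM : m < M) :
    ∃ C > (0 : ℝ), ∃ Y₀ : ℕ, ∀ y : ℕ, Y₀ ≤ y → ∀ θ ∈ Set.Icc m M, ∀ μ : ℝ, |μ| ≤ M →
      C * Real.exp ((y : ℝ) * Real.log ((y : ℝ) + 1) / 2) ≤
        ∫ x : ℝ, Real.exp (-θ * (x - μ) ^ 2 / 2) * Real.exp (-Real.exp x) *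
          Real.exp (x * (y : ℝ)) := by
  have hM : 0 < M := hm.trans hmM
  set E : ℝ := Real.exp 1 with hE
  have hE1 : 1 ≤ E := by rw [hE]; nlinarith [Real.add_one_le_exp (1:ℝ)]
  clear_value E
  refine ⟨1, one_pos, ⌈Real.exp (8 * E)⌉₊ + ⌈Real.exp (1 + M)⌉₊ + ⌈1024 * M ^ 2⌉₊ + 1, ?_⟩
  intro y hy θ hθ μ hμ
  set t : ℝ := (y : ℝ) with hts
  have hty : ((⌈Real.exp (8 * E)⌉₊ + ⌈Real.exp (1 + M)⌉₊ + ⌈1024 * M ^ 2⌉₊ + 1 : ℕ) : ℝ) ≤ t :=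
    by rw [hts]; exact_mod_cast Nat.cast_le.mpr hy
  clear_value t
  push_cast at hty
  have n1 := Nat.cast_nonneg (α := ℝ) ⌈Real.exp (8 * E)⌉₊
  have n2 := Nat.cast_nonneg (α := ℝ) ⌈Real.exp (1 + M)⌉₊
  have n3 := Nat.cast_nonneg (α := ℝ) ⌈1024 * M ^ 2⌉₊
  have c1' := Nat.le_ceil (Real.exp (8 * E))
  have c2' := Nat.le_ceil (Real.exp (1 + M))
  have c3' := Nat.le_ceil (1024 * M ^ 2)
  have ht1 : (1:ℝ) ≤ t := by linarith
  have ht8E : Real.exp (8 * E) ≤ t := by linarith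
  have ht1M : Real.exp (1 + M) ≤ t := by linarith
  have htM2 : 1024 * M ^ 2 ≤ t := by linarith
  have htpos : 0 < t + 1 := by linarith
  set a : ℝ := Real.log (t + 1) with ha
  have ha0 : 0 ≤ a := by rw [ha]; exact Real.log_nonneg (by linarith)
  have ha8E : 8 * E ≤ a := by rw [ha, Real.le_log_iff_exp_le htpos]; linarith
  have ha1M : 1 + M ≤ a := by rw [ha, Real.le_log_iff_exp_le htpos]; linarith
  have hexpa : Real.exp a = t + 1 := by rw [ha, Real.exp_log htpos]
  set s : ℝ := Real.sqrt t with hs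
  have hs0 : 0 ≤ s := by rw [hs]; exact Real.sqrt_nonneg t
  have hst : s ^ 2 = t := by rw [hs]; exact Real.sq_sqrt (by linarith)
  have hs32 : 32 * M ≤ s := by
    have h32 : (32 * M) ^ 2 ≤ t := by nlinarith
    have := Real.sqrt_le_sqrt h32
    rw [Real.sqrt_sq (by positivity : (0:ℝ) ≤ 32 * M)] at this
    rw [hs]; exact this
  have ha4s : a ≤ 4 * s := by
    have h1 : Real.sqrt (t + 1) ≤ 2 * s := by
      have hle : t + 1 ≤ (2 * s) ^ 2 := by nlinarith
      calc Real.sqrt (t + 1) ≤ Real.sqrt ((2*s)^2) := Real.sqrt_le_sqrt hle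
        _ = 2 * s := Real.sqrt_sq (by positivity)
    have h2 : a = 2 * Real.log (Real.sqrt (t + 1)) := by
      rw [ha, Real.log_sqrt htpos.le]; ring
    have h3 : Real.log (Real.sqrt (t + 1)) ≤ Real.sqrt (t + 1) - 1 :=
      Real.log_le_sub_one_of_pos (Real.sqrt_pos.mpr htpos)
    linarith
  clear_value a s
  -- the integrand
  set f : ℝ → ℝ := fun x => Real.exp (-θ * (x - μ) ^ 2 / 2) * Real.exp (-Real.exp x) *
      Real.exp (x * t) with hf
  have hθ0 : 0 < θ := lt_of_lt_of_le hm hθ.1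
  have hfc : Continuous f := by rw [hf]; fun_prop
  have hf_nonneg : ∀ x, 0 ≤ f x := fun x => by rw [hf]; positivity
  clear_value f
  have hint : Integrable f := by
    refine (integrable_rexp_quad (b := θ/2) (by linarith) (θ * μ + t)).mono'
      hfc.aestronglyMeasurable (Filter.Eventually.of_forall fun x => ?_)
    rw [Real.norm_eq_abs, abs_of_nonneg (hf_nonneg x), hf]
    simp only
    rw [← Real.exp_add, ← Real.exp_add, Real.exp_le_exp]
    have hring : -θ * (x - μ) ^ 2 / 2 + -Real.exp x + x * t =
        -(θ/2) * x ^ 2 + (θ * μ + t) * x - θ * μ ^ 2 / 2 - Real.exp x := by ring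
    rw [hring]
    linarith [Real.exp_pos x, mul_nonneg hθ0.le (sq_nonneg μ)]
  set B : ℝ := a * t - E * (t + 1) - M * (a + 1 + M) ^ 2 / 2 with hB
  clear_value B
  have key : ∀ x ∈ Set.Icc a (a + 1), Real.exp B ≤ f x := by
    intro x hx
    obtain ⟨hx1, hx2⟩ := hx
    rw [hf]
    simp only
    rw [← Real.exp_add, ← Real.exp_add, Real.exp_le_exp, hB]
    have he1 : Real.exp x ≤ E * (t + 1) := by
      calc Real.exp x ≤ Real.exp (a + 1) := Real.exp_le_exp.2 (by linarith)
        _ = Real.exp a * Real.exp 1 := Real.exp_add a 1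
        _ = E * (t + 1) := by rw [hexpa, hE]; ring
    have hxt : a * t ≤ x * t := by
      nlinarith [mul_nonneg (sub_nonneg.2 hx1) (by linarith : (0:ℝ) ≤ t)]
    have hμ1 := abs_le.mp hμ
    have hsq : (x - μ) ^ 2 ≤ (a + 1 + M) ^ 2 :=
      sq_le_sq' (by linarith) (by linarith)
    have hq : θ * (x - μ) ^ 2 / 2 ≤ M * (a + 1 + M) ^ 2 / 2 := by
      nlinarith [sq_nonneg (x - μ), hθ.2, mul_le_mul_of_nonneg_left hsq hM.le]
    linarith
  have hmeas : MeasurableSet (Set.Icc a (a + 1)) := measurableSet_Icc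
  have hvol : (volume (Set.Icc a (a + 1))).toReal = 1 := by
    rw [Real.volume_Icc]; norm_num
  have h1 : Real.exp B * 1 ≤ ∫ x in Set.Icc a (a + 1), f x := by
    have h1' := setIntegral_ge_of_const_le hmeas
      (by rw [Real.volume_Icc]; exact ENNReal.ofReal_ne_top) key hint.integrableOn
    rwa [measureReal_def, hvol, smul_eq_mul, mul_comm] at h1'
  have h2 : ∫ x in Set.Icc a (a + 1), f x ≤ ∫ x, f x :=
    setIntegral_le_integral hint (Filter.Eventually.of_forall hf_nonneg)
  have harith : t * a / 2 ≤ B := by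
    rw [hB]
    have d1 : E * (t + 1) ≤ t * a / 4 := by
      nlinarith [mul_nonneg (by linarith : (0:ℝ) ≤ a - 8*E) (by linarith : (0:ℝ) ≤ t),
        mul_nonneg (by linarith : (0:ℝ) ≤ E) (by linarith : (0:ℝ) ≤ t - 1)]
    have d2 : M * (a + 1 + M) ^ 2 / 2 ≤ t * a / 4 := by
      have h4a : (a + 1 + M) ^ 2 ≤ 4 * a ^ 2 := by
        nlinarith [mul_nonneg (by linarith : (0:ℝ) ≤ a - 1 - M) (by linarith : (0:ℝ) ≤ 3*a + 1 + M)]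
      have h8 : 8 * M * a ≤ t := by
        nlinarith [mul_nonneg (by linarith : (0:ℝ) ≤ s - 32*M) hs0,
          mul_le_mul_of_nonneg_left ha4s (by positivity : (0:ℝ) ≤ 8*M)]
      nlinarith [mul_le_mul_of_nonneg_right h8 ha0,
        mul_nonneg hM.le (by linarith : (0:ℝ) ≤ 4*a^2 - (a+1+M)^2)]
    linarith
  calc 1 * Real.exp (t * a / 2) = Real.exp (t * a / 2) := one_mul _
    _ ≤ Real.exp B := Real.exp_le_exp.2 harith
    _ = Real.exp B * 1 := (mul_one _).symm
    _ ≤ ∫ x, f x := h1.trans h2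
end

section
/- Good vector lemma: let ξ = (ξ_1,…,ξ_G) ∈ ℝ^G be such that for some index s, ξ_s ≠ ξ_g for all g ≠ s; let σ = (σ_1,…,σ_G) with σ_g > 0 for all g, and let α = (α_1,…,α_G) ∈ ℝ^G. If Σ_{g=1}^G α_g exp( ξ_g z + σ_g z²/2 ) = 0 for every z ∈ ℕ, then α_s = 0. -/
open MeasureTheory Filter

open MeasureTheory Filter

private lemma tendsto_exp_quad (c d : ℝ) (hd : d < 0 ∨ (d = 0 ∧ c < 0)) :
    Tendsto (fun z : ℕ => Real.exp (c * z + d * z ^ 2 / 2)) atTop (nhds 0) := by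
  have hz : Tendsto (fun z : ℕ => (z : ℝ)) atTop atTop := tendsto_natCast_atTop_atTop
  have hbot : Tendsto (fun z : ℕ => c * z + d * z ^ 2 / 2) atTop atBot := by
    rcases hd with hd | ⟨rfl, hc⟩
    · apply tendsto_atBot_mono' atTop ?_ (tendsto_neg_atTop_atBot.comp hz)
      filter_upwards [hz.eventually_ge_atTop (2 * (c + 1) / (-d))] with z hz'
      have h0 : (0:ℝ) ≤ (z:ℝ) := Nat.cast_nonneg z
      have : 2 * (c + 1) ≤ (z:ℝ) * (-d) :=
        (div_le_iff₀ (by linarith : (0:ℝ) < -d)).mp hz'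
      simp only [Function.comp]
      nlinarith [sq_nonneg ((z:ℝ))]
    · apply tendsto_atBot_mono' atTop ?_ (tendsto_neg_atTop_atBot.comp (hz.const_mul_atTop (by linarith : (0:ℝ) < -c)))
      filter_upwards with z
      simp only [Function.comp]
      nlinarith [Nat.cast_nonneg (α := ℝ) z]
  exact Real.tendsto_exp_atBot.comp hbot

private lemma key_group {G : ℕ} (ξ σv α : Fin G → ℝ) :
    ∀ S : Finset (Fin G),
      (∀ z : ℕ, ∑ g ∈ S, α g * Real.exp (ξ g * z + σv g * z ^ 2 / 2) = 0) →
      ∀ a b : ℝ, ∑ g ∈ S.filter (fun g => σv g = a ∧ ξ g = b), α g = 0 := by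
  classical
  intro S
  induction S using Finset.strongInduction with
  | _ S ih =>
    intro h a b
    rcases S.eq_empty_or_nonempty with rfl | hS
    · simp
    set a₀ := (S.image σv).max' (hS.image _) with ha₀
    have hS₁ : (S.filter fun g => σv g = a₀).Nonempty := by
      obtain ⟨x, hx, hx'⟩ := Finset.mem_image.1 ((S.image σv).max'_mem (hS.image _))
      exact ⟨x, Finset.mem_filter.2 ⟨hx, hx'⟩⟩
    set b₀ := ((S.filter fun g => σv g = a₀).image ξ).max' (hS₁.image _) with hb₀
    set S₂ := S.filter (fun g => σv g = a₀ ∧ ξ g = b₀) with hS₂def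
    have hS₂sub : S₂ ⊆ S := Finset.filter_subset _ _
    have hS₂ne : S₂.Nonempty := by
      obtain ⟨x, hx, hx'⟩ := Finset.mem_image.1
        (((S.filter fun g => σv g = a₀).image ξ).max'_mem (hS₁.image _))
      rw [Finset.mem_filter] at hx
      exact ⟨x, Finset.mem_filter.2 ⟨hx.1, hx.2, hx'⟩⟩
    have hmax : ∀ g ∈ S \ S₂, σv g - a₀ < 0 ∨ (σv g - a₀ = 0 ∧ ξ g - b₀ < 0) := by
      intro g hg
      rw [Finset.mem_sdiff] at hg
      obtain ⟨hgS, hgn⟩ := hg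
      have h1 : σv g ≤ a₀ := Finset.le_max' _ _ (Finset.mem_image_of_mem _ hgS)
      rcases lt_or_eq_of_le h1 with h1 | h1
      · left; linarith
      · right
        have h2 : ξ g ≤ b₀ :=
          Finset.le_max' _ _ (Finset.mem_image_of_mem _ (Finset.mem_filter.2 ⟨hgS, h1⟩))
        have h3 : ξ g ≠ b₀ := fun he => hgn (Finset.mem_filter.2 ⟨hgS, h1, he⟩)
        exact ⟨by linarith, sub_neg.2 (lt_of_le_of_ne h2 h3)⟩
    set c := ∑ g ∈ S₂, α g with hc
    have hmul : ∀ (z : ℕ) (T : Finset (Fin G)),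
        (∑ g ∈ T, α g * Real.exp (ξ g * z + σv g * z ^ 2 / 2)) *
          Real.exp (-(b₀ * z + a₀ * z ^ 2 / 2)) =
        ∑ g ∈ T, α g * Real.exp ((ξ g - b₀) * z + (σv g - a₀) * z ^ 2 / 2) := by
      intro z T
      rw [Finset.sum_mul]
      refine Finset.sum_congr rfl fun g _ => ?_
      rw [mul_assoc, ← Real.exp_add]
      congr 2
      ring
    have hF : ∀ z : ℕ,
        c + ∑ g ∈ S \ S₂, α g * Real.exp ((ξ g - b₀) * z + (σv g - a₀) * z ^ 2 / 2) = 0 := by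
      intro z
      have h0 := hmul z S
      rw [h z, zero_mul] at h0
      rw [← Finset.sum_sdiff hS₂sub] at h0
      have hc2 : ∑ g ∈ S₂, α g * Real.exp ((ξ g - b₀) * z + (σv g - a₀) * z ^ 2 / 2) = c := by
        rw [hc]
        refine Finset.sum_congr rfl fun g hg => ?_
        rw [hS₂def, Finset.mem_filter] at hg
        rw [hg.2.1, hg.2.2]
        simp
      rw [hc2] at h0
      linarith [h0]
    have hczero : c = 0 := by
      have hlim : Tendsto
          (fun z : ℕ => ∑ g ∈ S \ S₂, α g * Real.exp ((ξ g - b₀) * z + (σv g - a₀) * z ^ 2 / 2))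
          atTop (nhds 0) := by
        have := tendsto_finset_sum (S \ S₂) (fun g hg =>
          ((tendsto_exp_quad (ξ g - b₀) (σv g - a₀) (hmax g hg)).const_mul (α g)))
        simpa using this
      have h1 : Tendsto
          (fun z : ℕ => c + ∑ g ∈ S \ S₂,
            α g * Real.exp ((ξ g - b₀) * z + (σv g - a₀) * z ^ 2 / 2))
          atTop (nhds (c + 0)) := tendsto_const_nhds.add hlim
      have h2 : Tendsto (fun _ : ℕ => (0:ℝ)) atTop (nhds (c + 0)) := by
        convert h1 using 1
        funext z
        exact (hF z).symm
      have := tendsto_nhds_unique h2 tendsto_const_nhds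
      linarith
    have h' : ∀ z : ℕ, ∑ g ∈ S \ S₂, α g * Real.exp (ξ g * z + σv g * z ^ 2 / 2) = 0 := by
      intro z
      have h0 := h z
      rw [← Finset.sum_sdiff hS₂sub] at h0
      have hc2 : ∑ g ∈ S₂, α g * Real.exp (ξ g * z + σv g * z ^ 2 / 2) = 0 := by
        have : ∑ g ∈ S₂, α g * Real.exp (ξ g * z + σv g * z ^ 2 / 2)
            = c * Real.exp (b₀ * z + a₀ * z ^ 2 / 2) := by
          rw [hc, Finset.sum_mul]
          refine Finset.sum_congr rfl fun g hg => ?_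
          rw [hS₂def, Finset.mem_filter] at hg
          rw [hg.2.1, hg.2.2]
        rw [this, hczero, zero_mul]
      rw [hc2, add_zero] at h0
      exact h0
    have hih := ih (S \ S₂) (Finset.sdiff_ssubset hS₂sub hS₂ne) h' a b
    by_cases hab : a = a₀ ∧ b = b₀
    · obtain ⟨rfl, rfl⟩ := hab
      exact hczero
    · have heq : S.filter (fun g => σv g = a ∧ ξ g = b)
          = (S \ S₂).filter (fun g => σv g = a ∧ ξ g = b) := by
        ext g
        simp only [Finset.mem_filter, Finset.mem_sdiff, hS₂def]
        constructor
        · rintro ⟨hgS, h1, h2⟩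
          refine ⟨⟨hgS, fun hmem => ?_⟩, h1, h2⟩
          exact hab ⟨h1.symm.trans hmem.2.1, h2.symm.trans hmem.2.2⟩
        · rintro ⟨⟨hgS, -⟩, h1, h2⟩
          exact ⟨hgS, h1, h2⟩
      rw [heq]
      exact hih

/-- Good vector lemma: if ξ_s is distinct from all other ξ_g, all σ_g are positive, and
Σ_g α_g exp(ξ_g z + σ_g z²/2) = 0 for every natural number z, then α_s = 0. -/
theorem stmt7 {G : ℕ} (ξ σv α : Fin G → ℝ) (s : Fin G)
    (hgood : ∀ g, g ≠ s → ξ g ≠ ξ s) (hσ : ∀ g, 0 < σv g)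
    (h : ∀ z : ℕ, ∑ g, α g * Real.exp (ξ g * (z : ℝ) + σv g * (z : ℝ) ^ 2 / 2) = 0) :
    α s = 0 := by
  classical
  have hkey := key_group ξ σv α Finset.univ (by simpa using h) (σv s) (ξ s)
  have hfilter : Finset.univ.filter (fun g => σv g = σv s ∧ ξ g = ξ s) = {s} := by
    ext g
    simp only [Finset.mem_filter, Finset.mem_univ, true_and, Finset.mem_singleton]
    constructor
    · rintro ⟨-, h2⟩
      by_contra hne
      exact hgood g hne h2
    · rintro rfl; exact ⟨rfl, rfl⟩
  rw [hfilter, Finset.sum_singleton] at hkey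
  exact hkey
end

section
/- Lattice point outside a union of proper subspaces: for any n > 0 and any proper linear subspaces M_1,…,M_n of ℝᵖ, there exists a vector γ ∈ ℝᵖ all of whose coordinates are nonnegative integers such that γ ∉ ⋃_{i=1}^n M_i. -/
open MeasureTheory Filter

open MeasureTheory Filter Polynomial

/-- Lattice point outside a union of proper subspaces: given finitely many proper linear
subspaces of ℝᵖ, there is a vector with nonnegative integer coordinates lying outside
all of them. -/
theorem stmt8 {p : ℕ} (hp : 0 < p) {n : ℕ} (hn : 0 < n)
    (Msub : Fin n → Submodule ℝ (Fin p → ℝ)) (hproper : ∀ i, Msub i ≠ ⊤) :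
    ∃ γ : Fin p → ℕ, ∀ i, (fun j => (γ j : ℝ)) ∉ Msub i := by
  classical
  have hf : ∀ i, ∃ f : Module.Dual ℝ (Fin p → ℝ), f ≠ 0 ∧ (Msub i).map f = ⊥ := fun i =>
    Submodule.exists_dual_map_eq_bot_of_lt_top ((hproper i).lt_top) inferInstance
  choose f hf0 hfbot using hf
  set P : Fin n → ℝ[X] := fun i => ∑ j : Fin p, C (f i (Pi.single j 1)) * X ^ (j : ℕ) with hP
  have hcoeff : ∀ i (j : Fin p), (P i).coeff (j : ℕ) = f i (Pi.single j 1) := by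
    intro i j
    simp only [hP, Polynomial.finset_sum_coeff, Polynomial.coeff_C_mul,
      Polynomial.coeff_X_pow, mul_ite, mul_one, mul_zero]
    simp [Fin.val_inj]
  have hPne : ∀ i, P i ≠ 0 := by
    intro i hPi
    apply hf0 i
    refine LinearMap.ext fun v => ?_
    have hv : v = ∑ j : Fin p, v j • (Pi.single j 1 : Fin p → ℝ) := by
      ext k; simp [Finset.sum_apply, Pi.single_apply]
    rw [hv]
    simp only [map_sum, _root_.map_smul]
    have : ∀ j : Fin p, f i (Pi.single j 1) = 0 := fun j => by
      rw [← hcoeff i j, hPi]; simp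
    simp [this]
  -- roots are finite, choose t
  have hfin : (⋃ i, {x : ℝ | (P i).IsRoot x}).Finite :=
    Set.finite_iUnion fun i => Polynomial.finite_setOf_isRoot (hPne i)
  obtain ⟨t, ht⟩ : ∃ t : ℕ, (t : ℝ) ∉ ⋃ i, {x : ℝ | (P i).IsRoot x} := by
    by_contra h
    push_neg at h
    have : Set.Infinite (⋃ i, {x : ℝ | (P i).IsRoot x}) :=
      Set.infinite_of_injective_forall_mem (f := fun t : ℕ => (t:ℝ)) Nat.cast_injective h
    exact this hfin
  refine ⟨fun j => t ^ (j : ℕ), fun i hmem => ?_⟩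
  have heval : f i (fun j => ((t ^ (j:ℕ) : ℕ) : ℝ)) = (P i).eval (t : ℝ) := by
    have hv : (fun j : Fin p => ((t ^ (j:ℕ) : ℕ) : ℝ)) = ∑ j : Fin p, ((t:ℝ) ^ (j:ℕ)) • (Pi.single j 1 : Fin p → ℝ) := by
      ext k; simp [Finset.sum_apply, Pi.single_apply]
    rw [hv, map_sum]
    simp only [hP, Polynomial.eval_finset_sum, Polynomial.eval_mul, Polynomial.eval_C,
      Polynomial.eval_pow, Polynomial.eval_X, _root_.map_smul, smul_eq_mul]
    exact Finset.sum_congr rfl fun j _ => mul_comm _ _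
  have : f i (fun j => ((t ^ (j:ℕ) : ℕ) : ℝ)) = 0 := by
    have := hfbot i
    rw [Submodule.eq_bot_iff] at this
    exact this _ (Submodule.mem_map_of_mem hmem)
  rw [heval] at this
  exact ht (Set.mem_iUnion.2 ⟨i, this⟩)
end

section
/- Strict dual feasibility (deterministic lemma): let d be a positive integer, S ⊆ {1,…,d} with complement Sᶜ, Γ̂ a d×d real matrix, W, R, K ∈ ℝᵈ, Δ ∈ ℝᵈ with Δ_{Sᶜ} = 0, λ > 0 and α ∈ (0,1]. Suppose R − Γ̂Δ + W + λK = 0 (read blockwise over S and Sᶜ), Γ̂_{SS} is invertible, ‖K_S‖_∞ ≤ 2, ‖W‖_∞ + ‖R‖_∞ < αλ/4, and ‖Γ̂_{SᶜS}(Γ̂_{SS})⁻¹‖_{1,∞} ≤ 1 − α/2. Then ‖K_{Sᶜ}‖_∞ ≤ 2. -/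
open MeasureTheory Filter

open MeasureTheory Filter

/-- Strict dual feasibility (deterministic lemma): if R − Γ̂Δ + W + λK = 0 with
Δ supported on S, Γ̂_{SS} invertible, ‖K_S‖_∞ ≤ 2, ‖W‖_∞ + ‖R‖_∞ < αλ/4 and
‖Γ̂_{SᶜS}(Γ̂_{SS})⁻¹‖_{1,∞} ≤ 1 − α/2, then ‖K_{Sᶜ}‖_∞ ≤ 2. -/
theorem stmt18 {d : ℕ} (hd : 0 < d) (S : Finset (Fin d))
    (Γhat : Matrix (Fin d) (Fin d) ℝ) (W R K Δ : Fin d → ℝ) (lam α : ℝ)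
    (hlam : 0 < lam) (hα : 0 < α) (hα1 : α ≤ 1)
    (hΔ : ∀ a ∉ S, Δ a = 0)
    (heq : ∀ a, R a - Γhat.mulVec Δ a + W a + lam * K a = 0)
    (hinv : IsUnit (Γhat.submatrix
      (Subtype.val : {a : Fin d // a ∈ S} → Fin d)
      (Subtype.val : {a : Fin d // a ∈ S} → Fin d)).det)
    (hKS : ∀ a ∈ S, |K a| ≤ 2)
    (hWR : (⨆ a, |W a|) + (⨆ a, |R a|) < α * lam / 4)
    (hirr : maxRowSum
      ((Γhat.submatrix
          (Subtype.val : {a : Fin d // a ∉ S} → Fin d)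
          (Subtype.val : {a : Fin d // a ∈ S} → Fin d)) *
        ((Γhat.submatrix
          (Subtype.val : {a : Fin d // a ∈ S} → Fin d)
          (Subtype.val : {a : Fin d // a ∈ S} → Fin d))⁻¹)) ≤ 1 - α / 2) :
    ∀ a ∉ S, |K a| ≤ 2 := by
  intro a ha
  classical
  set A := Γhat.submatrix
      (Subtype.val : {a : Fin d // a ∈ S} → Fin d)
      (Subtype.val : {a : Fin d // a ∈ S} → Fin d) with hA
  set B := Γhat.submatrix
      (Subtype.val : {a : Fin d // a ∉ S} → Fin d)
      (Subtype.val : {a : Fin d // a ∈ S} → Fin d) with hB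
  set u : {a : Fin d // a ∈ S} → ℝ := fun i => Δ i.val with hu
  set v : {a : Fin d // a ∈ S} → ℝ := fun i => R i.val + W i.val + lam * K i.val with hv
  -- mulVec restricted to S
  have hmv : ∀ b : Fin d, Γhat.mulVec Δ b = ∑ i : {a : Fin d // a ∈ S}, Γhat b i.val * u i := by
    intro b
    have h1 : Γhat.mulVec Δ b = ∑ j, Γhat b j * Δ j := rfl
    rw [h1]
    rw [← Finset.sum_subset (Finset.subset_univ S) (fun x _ hx => by simp [hΔ x hx])]
    exact (Finset.sum_coe_sort S (fun j => Γhat b j * Δ j)).symm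
  -- A.mulVec u = v
  have hAu : A.mulVec u = v := by
    funext i
    have h := heq i.val
    have h2 : A.mulVec u i = Γhat.mulVec Δ i.val := by
      rw [hmv]; rfl
    rw [hv]
    simp only [h2]
    linarith
  have hu_eq : u = (A⁻¹).mulVec v := by
    rw [← hAu, Matrix.mulVec_mulVec, Matrix.nonsing_inv_mul A hinv, Matrix.one_mulVec]
  -- key identity on Sᶜ
  have hkey : lam * K a = (B * A⁻¹).mulVec v ⟨a, ha⟩ - R a - W a := by
    have h := heq a
    have h2 : Γhat.mulVec Δ a = (B * A⁻¹).mulVec v ⟨a, ha⟩ := by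
      rw [hmv a, hu_eq, ← Matrix.mulVec_mulVec]
      rfl
    linarith [h2 ▸ h]
  -- sup bounds
  have hbddW : BddAbove (Set.range fun a => |W a|) := Set.Finite.bddAbove (Set.finite_range _)
  have hbddR : BddAbove (Set.range fun a => |R a|) := Set.Finite.bddAbove (Set.finite_range _)
  have hW : ∀ b, |W b| ≤ ⨆ a, |W a| := fun b => le_ciSup hbddW b
  have hR : ∀ b, |R b| ≤ ⨆ a, |R a| := fun b => le_ciSup hbddR b
  set εW := ⨆ a, |W a| with hεW
  set εR := ⨆ a, |R a| with hεR
  have hεW0 : 0 ≤ εW := le_trans (abs_nonneg _) (hW a)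
  have hεR0 : 0 ≤ εR := le_trans (abs_nonneg _) (hR a)
  set Vmax := εR + εW + 2 * lam with hVmax
  have hVmax0 : 0 ≤ Vmax := by positivity
  have hvb : ∀ i : {a : Fin d // a ∈ S}, |v i| ≤ Vmax := by
    intro i
    have h1 : |v i| ≤ |R i.val| + |W i.val| + lam * |K i.val| := by
      rw [hv]
      calc |R i.val + W i.val + lam * K i.val| ≤ |R i.val + W i.val| + |lam * K i.val| :=
            abs_add_le _ _
        _ ≤ |R i.val| + |W i.val| + |lam| * |K i.val| := by
            rw [abs_mul]; linarith [abs_add_le (R i.val) (W i.val)]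
        _ = |R i.val| + |W i.val| + lam * |K i.val| := by rw [abs_of_pos hlam]
    have h2 : lam * |K i.val| ≤ lam * 2 := by
      exact mul_le_mul_of_nonneg_left (hKS i.val i.property) (le_of_lt hlam)
    have := hR i.val; have := hW i.val
    rw [hVmax]; linarith
  -- row sum bound
  set M := B * A⁻¹ with hM
  simp only [maxRowSum] at hirr
  have hrow : ∑ j, |M ⟨a, ha⟩ j| ≤ 1 - α / 2 := by
    refine le_trans ?_ hirr
    exact le_ciSup (f := fun i : {a : Fin d // a ∉ S} => ∑ j, |M i j|) (Set.Finite.bddAbove (Set.finite_range _)) ⟨a, ha⟩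
  have hrow0 : 0 ≤ ∑ j, |M ⟨a, ha⟩ j| := Finset.sum_nonneg fun j _ => abs_nonneg _
  have hmvb : |M.mulVec v ⟨a, ha⟩| ≤ (1 - α / 2) * Vmax := by
    have h1 : |M.mulVec v ⟨a, ha⟩| ≤ ∑ j, |M ⟨a, ha⟩ j * v j| := by
      exact Finset.abs_sum_le_sum_abs _ _
    have h2 : ∑ j, |M ⟨a, ha⟩ j * v j| ≤ ∑ j, |M ⟨a, ha⟩ j| * Vmax := by
      refine Finset.sum_le_sum fun j _ => ?_
      rw [abs_mul]
      exact mul_le_mul_of_nonneg_left (hvb j) (abs_nonneg _)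
    rw [← Finset.sum_mul] at h2
    calc |M.mulVec v ⟨a, ha⟩| ≤ (∑ j, |M ⟨a, ha⟩ j|) * Vmax := le_trans h1 h2
      _ ≤ (1 - α / 2) * Vmax := mul_le_mul_of_nonneg_right hrow hVmax0
  -- conclude
  have hfinal : lam * |K a| ≤ (1 - α / 2) * Vmax + εR + εW := by
    have h1 : |lam * K a| ≤ |M.mulVec v ⟨a, ha⟩| + |R a| + |W a| := by
      rw [hkey]
      calc |M.mulVec v ⟨a, ha⟩ - R a - W a|
          ≤ |M.mulVec v ⟨a, ha⟩ - R a| + |W a| := abs_sub _ _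
        _ ≤ |M.mulVec v ⟨a, ha⟩| + |R a| + |W a| := by
            linarith [abs_sub (M.mulVec v ⟨a, ha⟩) (R a)]
    rw [abs_mul, abs_of_pos hlam] at h1
    linarith [hmvb, hR a, hW a]
  have hABS : lam * |K a| ≤ 2 * lam := by
    rw [hVmax] at hfinal
    nlinarith [hWR, hεW0, hεR0, hα, hα1, hlam]
  have := mul_le_mul_of_nonneg_left (le_refl (2:ℝ)) (le_of_lt hlam)
  nlinarith [hABS, hlam]
end
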